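/- arXiv:1010.3582 — 7 statements merged into one kernel-verified Lean document; each statement's English description precedes it below -/
import Mathlib

section
/- Let $K \subset \mathbb{R}^d$ be a convex body, $C = K \cap \{x : u \cdot x \geq h_K(u) - t\}$ a cap, and $\lambda \geq 1$ such that $\lambda t$ is smaller than the width of $K$ in direction $u$ (equivalently $C^\lambda \neq K$). Then $\frac{\lambda}{d} V(C) \leq V(C^\lambda)$. -/
open MeasureTheory Set
open scoped RealInnerProductSpace Pointwise

lemma vol_smul_add {n : ℕ} (c : ℝ) (w : Fin n → ℝ) (A : Set (Fin n → ℝ)) :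
    volume ((fun y => c • y + w) '' A) = ENNReal.ofReal (|c| ^ n) * volume A := by
  have h1 : (fun y : Fin n → ℝ => c • y + w) '' A = (fun y => y + w) '' (c • A) := by
    rw [← Set.image_smul, Set.image_image]
  rw [h1, Set.image_add_right, measure_preimage_add_right, Measure.addHaar_smul, abs_pow]
  congr 3
  simp [Module.finrank_pi]

lemma prod_version {n : ℕ} (A : Set (ℝ × (Fin n → ℝ))) (hA : Convex ℝ A)
    (hAm : MeasurableSet A) (h t lam : ℝ) (ht : 0 < t) (hlam : 1 ≤ lam)
    (hub : ∀ p ∈ A, p.1 ≤ h)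
    (a : ℝ × (Fin n → ℝ)) (haA : a ∈ A) (ha1 : a.1 = h)
    (z : ℝ × (Fin n → ℝ)) (hzA : z ∈ A) (hz1 : z.1 < h - lam * t) :
    ENNReal.ofReal (lam / (n + 1)) * volume (A ∩ {p | h - t ≤ p.1}) ≤
      volume (A ∩ {p | h - lam * t ≤ p.1}) := by
  have hlt : h - lam * t ≤ h - t := by nlinarith
  set g : ℝ → ENNReal := fun s => volume (Prod.mk s ⁻¹' A) with hg_def
  have hg : Measurable g := measurable_measure_prodMk_left hAm
  -- Fubini expression for caps
  have volume_cap : ∀ c : ℝ, volume (A ∩ {p | c ≤ p.1}) = ∫⁻ s in Ici c, g s := by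
    intro c
    have hm : MeasurableSet (A ∩ {p | c ≤ p.1}) :=
      hAm.inter (measurable_fst measurableSet_Ici)
    rw [Measure.volume_eq_prod, Measure.prod_apply hm, ← lintegral_indicator measurableSet_Ici]
    refine lintegral_congr fun s => ?_
    by_cases hs : c ≤ s
    · have : Prod.mk s ⁻¹' (A ∩ {p | c ≤ p.1}) = Prod.mk s ⁻¹' A := by
        ext y; simp [hs]
      simp [this, Set.indicator_of_mem (mem_Ici.mpr hs), hg_def]
    · have : Prod.mk s ⁻¹' (A ∩ {p | c ≤ p.1}) = ∅ := by
        ext y; simp [hs]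
      simp [this, Set.indicator_of_notMem (fun hc => hs (mem_Ici.mp hc))]
  -- key per-slice estimate
  have hkey : ∀ τ ∈ Ico (h - t) h,
      ENNReal.ofReal (lam * t / (n + 1)) * g τ ≤ volume (A ∩ {p | h - lam * t ≤ p.1}) := by
    rintro τ ⟨hτ1, hτ2⟩
    have hzτ : z.1 < τ := by linarith
    set P : ℝ := τ - z.1 with hP_def
    set Q : ℝ := h - lam * t - z.1 with hQ_def
    set D : ℝ := h - τ with hD_def
    have hP : 0 < P := by simp only [hP_def]; linarith
    have hQ0 : 0 < Q := by simp only [hQ_def]; linarith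
    have hQP : Q ≤ P := by simp only [hP_def, hQ_def]; linarith
    have hD : 0 < D := by simp only [hD_def]; linarith
    -- generic cone slice bound
    have slice_bound : ∀ (w : ℝ × (Fin n → ℝ)), w ∈ A → ∀ s ρ : ℝ, 0 ≤ ρ → ρ ≤ 1 →
        ρ * τ + (1 - ρ) * w.1 = s → ENNReal.ofReal (ρ ^ n) * g τ ≤ g s := by
      intro w hw s ρ h0 h1 hs
      have hsub : (fun y => ρ • y + (1 - ρ) • w.2) '' (Prod.mk τ ⁻¹' A) ⊆ Prod.mk s ⁻¹' A := by
        rintro _ ⟨y, hy, rfl⟩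
        have hmem : ρ • ((τ, y) : ℝ × (Fin n → ℝ)) + (1 - ρ) • w ∈ A :=
          hA hy hw h0 (by linarith) (by ring)
        have heq : ρ • ((τ, y) : ℝ × (Fin n → ℝ)) + (1 - ρ) • w
            = (s, ρ • y + (1 - ρ) • w.2) := by
          rw [Prod.ext_iff]
          constructor
          · simpa using hs
          · rfl
        rw [heq] at hmem
        exact hmem
      calc ENNReal.ofReal (ρ ^ n) * g τ
          = volume ((fun y => ρ • y + (1 - ρ) • w.2) '' (Prod.mk τ ⁻¹' A)) := by
            rw [vol_smul_add, abs_of_nonneg h0]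
        _ ≤ g s := measure_mono hsub
    -- lower piece
    have lower : ∀ s ∈ Icc (h - lam * t) τ,
        ENNReal.ofReal (((s - z.1) / P) ^ n) * g τ ≤ g s := by
      intro s hs
      refine slice_bound z hzA s _ (div_nonneg (by linarith [hs.1]) hP.le)
        ((div_le_one hP).mpr (by linarith [hs.2])) ?_
      have hc : (s - z.1) / P * P = s - z.1 := div_mul_cancel₀ _ hP.ne'
      simp only [hP_def] at hc ⊢
      nlinarith [hc]
    -- upper piece
    have upper : ∀ s ∈ Ioc τ h,
        ENNReal.ofReal (((h - s) / D) ^ n) * g τ ≤ g s := by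
      intro s hs
      refine slice_bound a haA s _ (div_nonneg (by linarith [hs.2]) hD.le)
        ((div_le_one hD).mpr (by linarith [hs.1])) ?_
      have hc : (h - s) / D * D = h - s := div_mul_cancel₀ _ hD.ne'
      rw [ha1]
      simp only [hD_def] at hc ⊢
      nlinarith [hc]
    -- integral of lower piece
    have hp1 : ENNReal.ofReal ((τ - (h - lam * t)) / (n + 1)) * g τ ≤
        ∫⁻ s in Icc (h - lam * t) τ, g s := by
      have hmono : ∫⁻ s in Icc (h - lam * t) τ, ENNReal.ofReal (((s - z.1) / P) ^ n) * g τ ≤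
          ∫⁻ s in Icc (h - lam * t) τ, g s := setLIntegral_mono hg lower
      refine le_trans ?_ hmono
      rw [lintegral_mul_const _ (by fun_prop)]
      refine mul_le_mul_left ?_ _
      rw [← Measure.restrict_congr_set Ioc_ae_eq_Icc]
      have hcont : Continuous fun s : ℝ => ((s - z.1) / P) ^ n := by fun_prop
      rw [← ofReal_integral_eq_lintegral_ofReal (hcont.integrableOn_Ioc)
        (((ae_restrict_iff' measurableSet_Ioc).mpr (ae_of_all _ fun s hs =>
        pow_nonneg (div_nonneg (by linarith [hs.1, hz1]) hP.le) n)))]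
      refine ENNReal.ofReal_le_ofReal ?_
      have hab : h - lam * t ≤ τ := by linarith
      rw [← intervalIntegral.integral_of_le hab]
      have hval : ∫ s in (h - lam * t)..τ, ((s - z.1) / P) ^ n
          = (P ^ (n + 1) - Q ^ (n + 1)) / (↑n + 1) / P ^ n := by
        simp_rw [div_pow]
        rw [intervalIntegral.integral_div,
          intervalIntegral.integral_comp_sub_right (fun u => u ^ n) z.1, integral_pow]
      rw [hval]
      have key : (P - Q) * P ^ n ≤ P ^ (n + 1) - Q ^ (n + 1) := by
        have h1 : Q ^ (n + 1) ≤ Q * P ^ n := by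
          rw [pow_succ']
          exact mul_le_mul_of_nonneg_left (pow_le_pow_left₀ hQ0.le hQP n) hQ0.le
        nlinarith [pow_succ P n]
      have hPQ : τ - (h - lam * t) = P - Q := by simp only [hP_def, hQ_def]; ring
      rw [hPQ, div_div, div_le_div_iff₀ (by positivity) (by positivity)]
      nlinarith [key, pow_pos hP n, Nat.cast_nonneg (α := ℝ) n]
    -- integral of upper piece
    have hp2 : ENNReal.ofReal (D / (n + 1)) * g τ ≤ ∫⁻ s in Ioc τ h, g s := by
      have hmono : ∫⁻ s in Ioc τ h, ENNReal.ofReal (((h - s) / D) ^ n) * g τ ≤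
          ∫⁻ s in Ioc τ h, g s := setLIntegral_mono hg upper
      refine le_trans ?_ hmono
      rw [lintegral_mul_const _ (by fun_prop)]
      refine mul_le_mul_left ?_ _
      have hcont : Continuous fun s : ℝ => ((h - s) / D) ^ n := by fun_prop
      rw [← ofReal_integral_eq_lintegral_ofReal (hcont.integrableOn_Ioc)
        (((ae_restrict_iff' measurableSet_Ioc).mpr (ae_of_all _ fun s hs =>
        pow_nonneg (div_nonneg (by linarith [hs.2]) hD.le) n)))]
      refine ENNReal.ofReal_le_ofReal ?_
      rw [← intervalIntegral.integral_of_le hτ2.le]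
      have hval : ∫ s in τ..h, ((h - s) / D) ^ n
          = (D ^ (n + 1) - 0 ^ (n + 1)) / (↑n + 1) / D ^ n := by
        simp_rw [div_pow]
        rw [intervalIntegral.integral_div,
          intervalIntegral.integral_comp_sub_left (fun u => u ^ n) h, sub_self, integral_pow]
      rw [hval, zero_pow (Nat.succ_ne_zero n), sub_zero, pow_succ, mul_div_assoc,
        mul_comm, mul_div_assoc, div_self (pow_ne_zero n hD.ne'), mul_one]
    -- combine
    have hsplit : (∫⁻ s in Icc (h - lam * t) τ, g s) + ∫⁻ s in Ioc τ h, g s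
        = ∫⁻ s in Icc (h - lam * t) h, g s := by
      rw [← lintegral_union measurableSet_Ioc ?_, Icc_union_Ioc_eq_Icc (by linarith) hτ2.le]
      rw [Set.disjoint_left]
      rintro s ⟨_, h1⟩ ⟨h2, _⟩
      exact absurd h1 (not_le.mpr h2)
    calc ENNReal.ofReal (lam * t / (n + 1)) * g τ
        = ENNReal.ofReal ((τ - (h - lam * t)) / (n + 1)) * g τ
          + ENNReal.ofReal (D / (n + 1)) * g τ := by
          rw [← add_mul, ← ENNReal.ofReal_add (div_nonneg (by linarith) (by positivity)) (div_nonneg hD.le (by positivity))]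
          congr 2
          simp only [hD_def]
          ring
      _ ≤ (∫⁻ s in Icc (h - lam * t) τ, g s) + ∫⁻ s in Ioc τ h, g s := add_le_add hp1 hp2
      _ = ∫⁻ s in Icc (h - lam * t) h, g s := hsplit
      _ ≤ ∫⁻ s in Ici (h - lam * t), g s := lintegral_mono_set Icc_subset_Ici_self
      _ = volume (A ∩ {p | h - lam * t ≤ p.1}) := (volume_cap _).symm
  -- assemble
  have hVC : ∫⁻ s in Ici (h - t), g s ≤ ∫⁻ s in Ico (h - t) h, g s := by
    rw [← Ico_union_Ici_eq_Ici (by linarith : h - t ≤ h),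
      lintegral_union measurableSet_Ici ?_]
    · have hzero : ∫⁻ s in Ici h, g s = 0 := by
        rw [← Measure.restrict_congr_set Ioi_ae_eq_Ici]
        rw [setLIntegral_congr_fun measurableSet_Ioi (fun s hs => ?_),
          lintegral_zero]
        have : Prod.mk s ⁻¹' A = ∅ := by
          ext y
          simp only [mem_preimage, mem_empty_iff_false, iff_false]
          intro hy
          exact absurd (hub _ hy) (not_le.mpr hs)
        simp [hg_def, this]
      rw [hzero, add_zero]
    · rw [Set.disjoint_left]
      rintro s ⟨_, h1⟩ h2
      exact absurd (mem_Ici.mp h2) (not_le.mpr h1)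
  have main : ENNReal.ofReal (lam * t / (n + 1)) * volume (A ∩ {p | h - t ≤ p.1})
      ≤ volume (A ∩ {p | h - lam * t ≤ p.1}) * ENNReal.ofReal t := by
    calc ENNReal.ofReal (lam * t / (n + 1)) * volume (A ∩ {p | h - t ≤ p.1})
        = ENNReal.ofReal (lam * t / (n + 1)) * ∫⁻ s in Ici (h - t), g s := by
          rw [volume_cap]
      _ ≤ ENNReal.ofReal (lam * t / (n + 1)) * ∫⁻ s in Ico (h - t) h, g s :=
          mul_le_mul_right hVC _
      _ = ∫⁻ s in Ico (h - t) h, ENNReal.ofReal (lam * t / (n + 1)) * g s :=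
          (lintegral_const_mul _ hg).symm
      _ ≤ ∫⁻ _ in Ico (h - t) h, volume (A ∩ {p | h - lam * t ≤ p.1}) :=
          setLIntegral_mono measurable_const hkey
      _ = volume (A ∩ {p | h - lam * t ≤ p.1}) * volume (Ico (h - t) h) :=
          setLIntegral_const _ _
      _ = volume (A ∩ {p | h - lam * t ≤ p.1}) * ENNReal.ofReal t := by
          rw [Real.volume_Ico]
          congr 1
          ring_nf
  have hfactor : ENNReal.ofReal (lam * t / (n + 1))
      = ENNReal.ofReal t * ENNReal.ofReal (lam / (n + 1)) := by
    rw [← ENNReal.ofReal_mul ht.le]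
    congr 1
    ring
  rw [hfactor, mul_assoc, mul_comm (volume (A ∩ {p | h - lam * t ≤ p.1}))] at main
  exact (ENNReal.mul_le_mul_iff_right (by simp [ht]) ENNReal.ofReal_ne_top).mp main

/-- For a convex body `K`, a cap `C = K ∩ {x : ⟪u,x⟫ ≥ h - t}` and `λ ≥ 1`
such that `C^λ ≠ K`, we have `(λ/d) V(C) ≤ V(C^λ)`. -/
theorem stmt1 {d : ℕ} (K : Set (EuclideanSpace ℝ (Fin d)))
    (hKconv : Convex ℝ K) (hKcomp : IsCompact K) (hKint : (interior K).Nonempty)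
    (u : EuclideanSpace ℝ (Fin d)) (hu : ‖u‖ = 1)
    (h : ℝ) (hsupp : IsGreatest ((fun x => ⟪u, x⟫) '' K) h)
    (t : ℝ) (ht : 0 < t)
    (lam : ℝ) (hlam : 1 ≤ lam)
    (hne : K ∩ {x | h - lam * t ≤ ⟪u, x⟫} ≠ K) :
    ENNReal.ofReal (lam / d) * volume (K ∩ {x | h - t ≤ ⟪u, x⟫}) ≤
      volume (K ∩ {x | h - lam * t ≤ ⟪u, x⟫}) := by
  rcases d with _ | n
  · exfalso
    have hu0 : u = 0 := by ext i; exact Fin.elim0 i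
    rw [hu0] at hu
    simp at hu
  -- an orthonormal basis whose first vector is `u`
  have hcard : Module.finrank ℝ (EuclideanSpace ℝ (Fin (n + 1))) = Fintype.card (Fin (n + 1)) := by
    simp [finrank_euclideanSpace]
  have horth : Orthonormal ℝ (({0} : Set (Fin (n + 1))).restrict (fun _ => u)) := by
    constructor
    · intro i; exact hu
    · intro i j hij
      exact absurd (Subtype.ext ((Set.mem_singleton_iff.mp i.2).trans
        (Set.mem_singleton_iff.mp j.2).symm)) hij
  obtain ⟨b, hb⟩ := horth.exists_orthonormalBasis_extension_of_card_eq hcard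
  have hb0 : b 0 = u := hb 0 rfl
  -- the coordinate map
  set F : EuclideanSpace ℝ (Fin (n + 1)) → ℝ × (Fin n → ℝ) :=
    fun x => (b.repr x 0, fun j => b.repr x ((0 : Fin (n + 1)).succAbove j)) with hF_def
  have hF_eq : F = (MeasurableEquiv.piFinSuccAbove (fun _ : Fin (n + 1) => ℝ) 0) ∘
      (MeasurableEquiv.toLp 2 (Fin (n + 1) → ℝ)).symm ∘ ⇑b.repr := by
    funext x
    rfl
  have hFmp : MeasurePreserving F volume volume := by
    rw [hF_eq]
    exact ((volume_preserving_piFinSuccAbove (fun _ : Fin (n + 1) => ℝ) 0).comp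
      ((EuclideanSpace.volume_preserving_symm_measurableEquiv_toLp (Fin (n + 1))).comp
        b.measurePreserving_repr))
  -- images under F preserve volume
  have himg : ∀ S : Set (EuclideanSpace ℝ (Fin (n + 1))), MeasurableSet S →
      volume (F '' S) = volume S := by
    intro S hS
    have h1 : ⇑b.repr '' S = ⇑b.repr.symm ⁻¹' S :=
      congrFun (Set.image_eq_preimage_of_inverse (fun x => b.repr.symm_apply_apply x)
        (fun x => b.repr.apply_symm_apply x)) S
    have m1 : MeasurableSet (⇑b.repr.symm ⁻¹' S) := b.repr.symm.continuous.measurable hS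
    have h2 := (MeasurableEquiv.toLp 2 (Fin (n + 1) → ℝ)).symm.image_eq_preimage_symm
      (⇑b.repr.symm ⁻¹' S)
    have m2 : MeasurableSet (⇑(MeasurableEquiv.toLp 2 (Fin (n + 1) → ℝ)).symm.symm ⁻¹'
        (⇑b.repr.symm ⁻¹' S)) :=
      (MeasurableEquiv.toLp 2 (Fin (n + 1) → ℝ)).symm.symm.measurable m1
    rw [hF_eq, Set.image_comp, Set.image_comp, h1, h2,
      (MeasurableEquiv.piFinSuccAbove (fun _ : Fin (n + 1) => ℝ) 0).image_eq_preimage_symm,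
      ((volume_preserving_piFinSuccAbove (fun _ : Fin (n + 1) => ℝ) 0).symm _).measure_preimage
        m2.nullMeasurableSet,
      ((EuclideanSpace.volume_preserving_symm_measurableEquiv_toLp (Fin (n + 1))).symm _).measure_preimage
        m1.nullMeasurableSet,
      b.measurePreserving_repr_symm.measure_preimage hS.nullMeasurableSet]
  -- first coordinate is the inner product with u
  have h1 : ∀ x, (F x).1 = ⟪u, x⟫ := by
    intro x
    simp only [hF_def]
    rw [b.repr_apply_apply x 0, hb0]
  -- caps map to caps
  have hcap : ∀ c : ℝ, F '' (K ∩ {x | c ≤ ⟪u, x⟫}) = (F '' K) ∩ {p | c ≤ p.1} := by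
    intro c
    have hset : {x : EuclideanSpace ℝ (Fin (n + 1)) | c ≤ ⟪u, x⟫}
        = F ⁻¹' {p : ℝ × (Fin n → ℝ) | c ≤ p.1} := by
      ext x
      simp only [Set.mem_setOf_eq, Set.mem_preimage]
      rw [← h1 x]
    rw [hset, Set.image_inter_preimage]
  have hinner_cont : Continuous fun x : EuclideanSpace ℝ (Fin (n + 1)) => ⟪u, x⟫ :=
    continuous_const.inner continuous_id
  have hcapm : ∀ c : ℝ, MeasurableSet (K ∩ {x | c ≤ ⟪u, x⟫}) := by
    intro c
    exact hKcomp.measurableSet.inter (hinner_cont.measurable measurableSet_Ici)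
  -- linearity of F
  have hlinF : ∀ (c c' : ℝ) (x y : EuclideanSpace ℝ (Fin (n + 1))),
      F (c • x + c' • y) = c • F x + c' • F y := by
    intro c c' x y
    simp only [hF_def, map_add, _root_.map_smul, Prod.mk_add_mk, Prod.smul_mk, Prod.ext_iff]
    constructor
    · simp [PiLp.add_apply, PiLp.smul_apply, smul_eq_mul]
    · funext j
      simp [PiLp.add_apply, PiLp.smul_apply, smul_eq_mul]
  have hAconv : Convex ℝ (F '' K) := by
    rintro p ⟨x, hx, rfl⟩ q ⟨y, hy, rfl⟩ cA cB hca hcb hab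
    exact ⟨cA • x + cB • y, hKconv hx hy hca hcb hab, hlinF cA cB x y⟩
  have hFcont : Continuous F := by
    refine Continuous.prodMk ?_ ?_
    · exact (EuclideanSpace.proj (0 : Fin (n + 1))).continuous.comp b.repr.continuous
    · exact continuous_pi fun j =>
        (EuclideanSpace.proj ((0 : Fin (n + 1)).succAbove j)).continuous.comp b.repr.continuous
  have hAm : MeasurableSet (F '' K) := (hKcomp.image hFcont).measurableSet
  have hub : ∀ p ∈ F '' K, p.1 ≤ h := by
    rintro p ⟨x, hx, rfl⟩
    rw [h1 x]
    exact hsupp.2 ⟨x, hx, rfl⟩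
  obtain ⟨x₀, hx₀K, hx₀⟩ := hsupp.1
  have hz : ∃ x ∈ K, ⟪u, x⟫ < h - lam * t := by
    by_contra hc
    push_neg at hc
    exact hne (Set.inter_eq_left.mpr fun x hx => hc x hx)
  obtain ⟨x₁, hx₁K, hx₁⟩ := hz
  have hmain := prod_version (F '' K) hAconv hAm h t lam ht hlam hub
    (F x₀) ⟨x₀, hx₀K, rfl⟩ (by rw [h1]; exact hx₀)
    (F x₁) ⟨x₁, hx₁K, rfl⟩ (by rw [h1]; exact hx₁)
  rw [← hcap, ← hcap, himg _ (hcapm _), himg _ (hcapm _)] at hmain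
  have hcast : ((n : ℝ) + 1) = ((n + 1 : ℕ) : ℝ) := by push_cast; ring
  rw [hcast] at hmain
  exact hmain
end

section
/- Let $K \subset \mathbb{R}^d$ be a convex body, $C \neq K$ a cap of $K$, and $0 < \mu < 1$. Then $\mu^d V(C) \leq V(C^\mu) \leq d\mu\, V(C)$. -/
open MeasureTheory
open scoped RealInnerProductSpace
open scoped Pointwise ENNReal

lemma slice_homothety (n : ℕ) (c : Fin n → ℝ) (s : ℝ) (S : Set (Fin n → ℝ)) :
    volume ((fun y => c + s • y) '' S) = ENNReal.ofReal (|s| ^ n) * volume S := by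
  have h1 : (fun y => c + s • y) '' S = c +ᵥ (s • S) := by
    rw [← Set.image_vadd, ← Set.image_smul, Set.image_image]; rfl
  rw [h1, measure_vadd, Measure.addHaar_smul]
  simp [Module.finrank_fintype_fun_eq_card]

lemma lint1 (n : ℕ) {a b : ℝ} (hab : a < b) :
    ∫⁻ w in Set.Ioc a b, ENNReal.ofReal (((w - a) / (b - a)) ^ n) =
      ENNReal.ofReal ((b - a) / (n + 1)) := by
  have hL : (0:ℝ) < b - a := by linarith
  have hcont : Continuous fun w : ℝ => ((w - a) / (b - a)) ^ n := by continuity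
  have hint : IntegrableOn (fun w : ℝ => ((w - a) / (b - a)) ^ n) (Set.Ioc a b) :=
    hcont.integrableOn_Ioc
  have hnn : 0 ≤ᵐ[volume.restrict (Set.Ioc a b)] fun w : ℝ => ((w - a) / (b - a)) ^ n := by
    refine (ae_restrict_iff' measurableSet_Ioc).2 (Filter.Eventually.of_forall fun w hw => ?_)
    have : 0 ≤ w - a := by linarith [hw.1]
    positivity
  rw [← ofReal_integral_eq_lintegral_ofReal hint hnn]
  congr 1
  rw [← intervalIntegral.integral_of_le hab.le]
  have heq : ∀ w : ℝ, ((w - a) / (b - a)) ^ n = ((b-a)⁻¹)^n * (w - a) ^ n := by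
    intro w; rw [div_pow]; ring
  simp_rw [heq]
  rw [intervalIntegral.integral_const_mul]
  have h2 := intervalIntegral.integral_comp_sub_right (fun x : ℝ => x ^ n) a (a := a) (b := b)
  rw [h2, sub_self, integral_pow]
  have hne : (b - a) ≠ 0 := ne_of_gt hL
  field_simp
  rw [zero_pow (Nat.succ_ne_zero n), sub_zero, pow_succ, ← mul_assoc, ← mul_pow, one_div,
    inv_mul_cancel₀ hne, one_pow, one_mul]

lemma lint2 (n : ℕ) {a b : ℝ} (hab : a < b) :
    ∫⁻ w in Set.Ioc a b, ENNReal.ofReal (((b - w) / (b - a)) ^ n) =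
      ENNReal.ofReal ((b - a) / (n + 1)) := by
  have hL : (0:ℝ) < b - a := by linarith
  have hcont : Continuous fun w : ℝ => ((b - w) / (b - a)) ^ n := by continuity
  have hint : IntegrableOn (fun w : ℝ => ((b - w) / (b - a)) ^ n) (Set.Ioc a b) :=
    hcont.integrableOn_Ioc
  have hnn : 0 ≤ᵐ[volume.restrict (Set.Ioc a b)] fun w : ℝ => ((b - w) / (b - a)) ^ n := by
    refine (ae_restrict_iff' measurableSet_Ioc).2 (Filter.Eventually.of_forall fun w hw => ?_)
    have : 0 ≤ b - w := by linarith [hw.2]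
    positivity
  rw [← ofReal_integral_eq_lintegral_ofReal hint hnn]
  congr 1
  rw [← intervalIntegral.integral_of_le hab.le]
  have heq : ∀ w : ℝ, ((b - w) / (b - a)) ^ n = ((b-a)⁻¹)^n * (b - w) ^ n := by
    intro w; rw [div_pow]; ring
  simp_rw [heq]
  rw [intervalIntegral.integral_const_mul]
  have h2 := intervalIntegral.integral_comp_sub_left (fun x : ℝ => x ^ n) b (a := a) (b := b)
  rw [h2, sub_self, integral_pow]
  have hne : (b - a) ≠ 0 := ne_of_gt hL
  field_simp
  rw [zero_pow (Nat.succ_ne_zero n), sub_zero, pow_succ, ← mul_assoc, ← mul_pow, one_div,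
    inv_mul_cancel₀ hne, one_pow, one_mul]

lemma core (n : ℕ) (K : Set (ℝ × (Fin n → ℝ))) (hKm : MeasurableSet K)
    (hconv : Convex ℝ K)
    (h t μ : ℝ) (ht : 0 < t) (hμ0 : 0 < μ) (hμ1 : μ < 1)
    (hmax : ∀ p ∈ K, p.1 ≤ h)
    (x₀ : ℝ × (Fin n → ℝ)) (hx₀K : x₀ ∈ K) (hx₀ : x₀.1 = h)
    (z : ℝ × (Fin n → ℝ)) (hzK : z ∈ K) (hz : z.1 = h - t) :
    volume (K ∩ {p | h - μ * t ≤ p.1}) ≤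
      ENNReal.ofReal ((n + 1 : ℝ) * μ) * volume (K ∩ {p | h - t ≤ p.1}) := by
  have hμt : μ * t < t := by nlinarith
  have hμt0 : 0 < μ * t := by positivity
  have hhalf : ∀ c : ℝ, MeasurableSet {p : ℝ × (Fin n → ℝ) | c ≤ p.1} :=
    fun c => measurableSet_le measurable_const measurable_fst
  set C : Set (ℝ × (Fin n → ℝ)) := K ∩ {p | h - t ≤ p.1} with hCdef
  set Cm : Set (ℝ × (Fin n → ℝ)) := K ∩ {p | h - μ * t ≤ p.1} with hCmdef
  have hCMeas : MeasurableSet C := hKm.inter (hhalf _)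
  have hCmMeas : MeasurableSet Cm := hKm.inter (hhalf _)
  set VC := volume C with hVC
  set A : ℝ → ℝ≥0∞ := fun v => volume (Prod.mk v ⁻¹' K) with hA
  -- slice of C is slice of K for w ≥ h - t
  have hsliceC : ∀ w : ℝ, h - t ≤ w → Prod.mk w ⁻¹' C = Prod.mk w ⁻¹' K := by
    intro w hw
    ext y
    simp only [hCdef, Set.mem_preimage, Set.mem_inter_iff, Set.mem_setOf_eq]
    exact and_iff_left hw
  -- KEY: for every v in the cap interval, t/(n+1) * A v ≤ VC
  have key : ∀ v : ℝ, h - μ * t ≤ v → v ≤ h →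
      ENNReal.ofReal (t / (n + 1)) * A v ≤ VC := by
    intro v hv1 hv2
    have hv3 : h - t < v := by linarith
    -- lower cone
    have hden : 0 < v - (h - t) := by linarith
    have lower : ∀ w ∈ Set.Ioc (h - t) v,
        ENNReal.ofReal (((w - (h - t)) / (v - (h - t))) ^ n) * A v ≤
          volume (Prod.mk w ⁻¹' C) := by
      intro w hw
      set s := (w - (h - t)) / (v - (h - t)) with hs
      have hs0 : 0 ≤ s := div_nonneg (by linarith [hw.1]) hden.le
      have hs1 : s ≤ 1 := by rw [div_le_one hden]; linarith [hw.2]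
      have himg : (fun y => (1 - s) • z.2 + s • y) '' (Prod.mk v ⁻¹' K) ⊆
          Prod.mk w ⁻¹' C := by
        rintro _ ⟨y, hy, rfl⟩
        have hmem : (1 - s) • z + s • (v, y) ∈ K :=
          hconv hzK hy (by linarith) hs0 (by ring)
        have hptd : (1 - s) • z + s • (v, y) = (w, (1 - s) • z.2 + s • y) := by
          have hfst : (1 - s) * z.1 + s * v = w := by
            rw [hz, hs]; field_simp; ring
          ext
          · simpa using hfst
          · rfl
        rw [hptd] at hmem
        refine ⟨hmem, ?_⟩
        simp only [Set.mem_setOf_eq]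
        linarith [hw.1]
      calc ENNReal.ofReal (s ^ n) * A v
          = volume ((fun y => (1 - s) • z.2 + s • y) '' (Prod.mk v ⁻¹' K)) := by
            rw [slice_homothety, abs_of_nonneg hs0]
        _ ≤ volume (Prod.mk w ⁻¹' C) := measure_mono himg
    have lowint : ENNReal.ofReal ((v - (h - t)) / (n + 1)) * A v ≤
        ∫⁻ w in Set.Ioc (h - t) v, volume (Prod.mk w ⁻¹' C) := by
      have hmeasratio : Measurable fun w : ℝ =>
          ENNReal.ofReal (((w - (h - t)) / (v - (h - t))) ^ n) * A v :=
        ((((measurable_id.sub measurable_const).div measurable_const).pow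
          measurable_const).ennreal_ofReal).mul_const _
      calc ENNReal.ofReal ((v - (h - t)) / (n + 1)) * A v
          = (∫⁻ w in Set.Ioc (h - t) v,
              ENNReal.ofReal (((w - (h - t)) / (v - (h - t))) ^ n)) * A v := by
            rw [lint1 n hv3]
        _ = ∫⁻ w in Set.Ioc (h - t) v,
              ENNReal.ofReal (((w - (h - t)) / (v - (h - t))) ^ n) * A v := by
            rw [lintegral_mul_const _ (by fun_prop :
              Measurable fun w : ℝ => ENNReal.ofReal (((w - (h - t)) / (v - (h - t))) ^ n))]
        _ ≤ ∫⁻ w in Set.Ioc (h - t) v, volume (Prod.mk w ⁻¹' C) :=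
            setLIntegral_mono (measurable_measure_prodMk_left hCMeas) lower
    have upint : ENNReal.ofReal ((h - v) / (n + 1)) * A v ≤
        ∫⁻ w in Set.Ioc v h, volume (Prod.mk w ⁻¹' C) := by
      rcases eq_or_lt_of_le hv2 with heq | hlt
      · simp [heq]
      · have upper : ∀ w ∈ Set.Ioc v h,
            ENNReal.ofReal (((h - w) / (h - v)) ^ n) * A v ≤
              volume (Prod.mk w ⁻¹' C) := by
          intro w hw
          set s := (h - w) / (h - v) with hs
          have hdenu : 0 < h - v := by linarith
          have hs0 : 0 ≤ s := div_nonneg (by linarith [hw.2]) hdenu.le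
          have hs1 : s ≤ 1 := by rw [div_le_one hdenu]; linarith [hw.1]
          have himg : (fun y => (1 - s) • x₀.2 + s • y) '' (Prod.mk v ⁻¹' K) ⊆
              Prod.mk w ⁻¹' C := by
            rintro _ ⟨y, hy, rfl⟩
            have hmem : (1 - s) • x₀ + s • (v, y) ∈ K :=
              hconv hx₀K hy (by linarith) hs0 (by ring)
            have hptd : (1 - s) • x₀ + s • (v, y) = (w, (1 - s) • x₀.2 + s • y) := by
              have hfst : (1 - s) * x₀.1 + s * v = w := by
                rw [hx₀, hs]; field_simp; ring
              ext
              · simpa using hfst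
              · rfl
            rw [hptd] at hmem
            refine ⟨hmem, ?_⟩
            simp only [Set.mem_setOf_eq]
            linarith [hw.1]
          calc ENNReal.ofReal (s ^ n) * A v
              = volume ((fun y => (1 - s) • x₀.2 + s • y) '' (Prod.mk v ⁻¹' K)) := by
                rw [slice_homothety, abs_of_nonneg hs0]
            _ ≤ volume (Prod.mk w ⁻¹' C) := measure_mono himg
        calc ENNReal.ofReal ((h - v) / (n + 1)) * A v
            = (∫⁻ w in Set.Ioc v h, ENNReal.ofReal (((h - w) / (h - v)) ^ n)) * A v := by
              rw [lint2 n hlt]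
          _ = ∫⁻ w in Set.Ioc v h, ENNReal.ofReal (((h - w) / (h - v)) ^ n) * A v := by
              rw [lintegral_mul_const _ (by fun_prop :
                Measurable fun w : ℝ => ENNReal.ofReal (((h - w) / (h - v)) ^ n))]
          _ ≤ ∫⁻ w in Set.Ioc v h, volume (Prod.mk w ⁻¹' C) :=
              setLIntegral_mono (measurable_measure_prodMk_left hCMeas) upper
    have hsum : (∫⁻ w in Set.Ioc (h - t) v, volume (Prod.mk w ⁻¹' C)) +
        ∫⁻ w in Set.Ioc v h, volume (Prod.mk w ⁻¹' C) ≤ VC := by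
      rw [← lintegral_union measurableSet_Ioc (Set.Ioc_disjoint_Ioc_of_le le_rfl),
        Set.Ioc_union_Ioc_eq_Ioc hv3.le hv2]
      calc ∫⁻ w in Set.Ioc (h - t) h, volume (Prod.mk w ⁻¹' C)
          ≤ ∫⁻ w, volume (Prod.mk w ⁻¹' C) := setLIntegral_le_lintegral _ _
        _ = VC := by rw [hVC, MeasureTheory.Measure.volume_eq_prod, Measure.prod_apply hCMeas]
    calc ENNReal.ofReal (t / (n + 1)) * A v
        = ENNReal.ofReal ((v - (h - t)) / (n + 1)) * A v +
            ENNReal.ofReal ((h - v) / (n + 1)) * A v := by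
          rw [← add_mul, ← ENNReal.ofReal_add
            (div_nonneg (by linarith) (by positivity))
            (div_nonneg (by linarith) (by positivity))]
          congr 2
          rw [← add_div]
          congr 1
          ring
      _ ≤ _ + _ := add_le_add lowint upint
      _ ≤ VC := hsum
  -- now bound the volume of Cm
  have htne : ENNReal.ofReal t ≠ 0 := by simp [ht]
  have httop : ENNReal.ofReal t ≠ ⊤ := ENNReal.ofReal_ne_top
  set B : ℝ≥0∞ := ((n + 1 : ℕ) : ℝ≥0∞) * VC / ENNReal.ofReal t with hB
  have hbound : ∀ v : ℝ, volume (Prod.mk v ⁻¹' Cm) ≤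
      (Set.Icc (h - μ * t) h).indicator (fun _ => B) v := by
    intro v
    by_cases hv : v ∈ Set.Icc (h - μ * t) h
    · rw [Set.indicator_of_mem hv]
      have h1 : volume (Prod.mk v ⁻¹' Cm) ≤ A v :=
        measure_mono (Set.preimage_mono Set.inter_subset_left)
      refine h1.trans ?_
      rw [hB, ENNReal.le_div_iff_mul_le (Or.inl htne) (Or.inl httop)]
      have h3 : ENNReal.ofReal t = ((n + 1 : ℕ) : ℝ≥0∞) * ENNReal.ofReal (t / (n + 1)) := by
        rw [← ENNReal.ofReal_natCast, ← ENNReal.ofReal_mul (by positivity)]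
        congr 1
        push_cast
        field_simp
      calc A v * ENNReal.ofReal t
          = ((n + 1 : ℕ) : ℝ≥0∞) * (ENNReal.ofReal (t / (n + 1)) * A v) := by
            rw [h3]; ring
        _ ≤ ((n + 1 : ℕ) : ℝ≥0∞) * VC := by
            exact mul_le_mul_right (key v hv.1 hv.2) _
    · rw [Set.indicator_of_notMem hv]
      have hempty : Prod.mk v ⁻¹' Cm = ∅ := by
        ext y
        simp only [Set.mem_preimage, hCmdef, Set.mem_inter_iff, Set.mem_setOf_eq,
          Set.mem_empty_iff_false, iff_false, not_and]
        intro hyK hyge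
        exact hv ⟨hyge, hmax _ hyK⟩
      simp [hempty]
  calc volume Cm = ∫⁻ v, volume (Prod.mk v ⁻¹' Cm) := by
        rw [MeasureTheory.Measure.volume_eq_prod, Measure.prod_apply hCmMeas]
    _ ≤ ∫⁻ v, (Set.Icc (h - μ * t) h).indicator (fun _ => B) v := lintegral_mono hbound
    _ = B * volume (Set.Icc (h - μ * t) h) := by
        rw [lintegral_indicator measurableSet_Icc, setLIntegral_const]
    _ = B * ENNReal.ofReal (μ * t) := by
        rw [Real.volume_Icc]
        congr 1
        ring_nf
    _ = ENNReal.ofReal ((n + 1 : ℝ) * μ) * VC := by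
        rw [hB, ENNReal.ofReal_mul hμ0.le, mul_comm (ENNReal.ofReal μ) (ENNReal.ofReal t),
          ← mul_assoc, ENNReal.div_mul_cancel htne httop,
          ENNReal.ofReal_mul (by positivity : (0:ℝ) ≤ (n + 1 : ℝ))]
        have : ENNReal.ofReal ((n : ℝ) + 1) = ((n + 1 : ℕ) : ℝ≥0∞) := by
          rw [← ENNReal.ofReal_natCast]
          congr 1
          push_cast
          ring
        rw [this]
        ring

/-- For a convex body `K`, a cap `C = K ∩ {x : ⟪u,x⟫ ≥ h - t}` with `C ≠ K`,
and `0 < μ < 1`, we have `μ^d V(C) ≤ V(C^μ) ≤ dμ V(C)`. -/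
theorem stmt2 {d : ℕ} (K : Set (EuclideanSpace ℝ (Fin d)))
    (hKconv : Convex ℝ K) (hKcomp : IsCompact K) (hKint : (interior K).Nonempty)
    (u : EuclideanSpace ℝ (Fin d)) (hu : ‖u‖ = 1)
    (h : ℝ) (hsupp : IsGreatest ((fun x => ⟪u, x⟫) '' K) h)
    (t : ℝ) (ht : 0 < t)
    (hCne : K ∩ {x | h - t ≤ ⟪u, x⟫} ≠ K)
    (μ : ℝ) (hμ0 : 0 < μ) (hμ1 : μ < 1) :
    ENNReal.ofReal (μ ^ d) * volume (K ∩ {x | h - t ≤ ⟪u, x⟫}) ≤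
        volume (K ∩ {x | h - μ * t ≤ ⟪u, x⟫}) ∧
    volume (K ∩ {x | h - μ * t ≤ ⟪u, x⟫}) ≤
        ENNReal.ofReal (d * μ) * volume (K ∩ {x | h - t ≤ ⟪u, x⟫}) := by
  obtain ⟨x₀, hx₀K, hx₀⟩ : ∃ x, x ∈ K ∧ ⟪u, x⟫ = h := by
    rcases hsupp.1 with ⟨x, hx, hxx⟩; exact ⟨x, hx, hxx⟩
  constructor
  · -- Part 1
    have himg : AffineMap.homothety x₀ μ '' (K ∩ {x | h - t ≤ ⟪u, x⟫}) ⊆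
        K ∩ {x | h - μ * t ≤ ⟪u, x⟫} := by
      rintro _ ⟨x, ⟨hxK, hxt⟩, rfl⟩
      have happ : AffineMap.homothety x₀ μ x = μ • x + (1 - μ) • x₀ := by
        simp [AffineMap.homothety_apply, smul_sub, sub_smul]
        abel
      rw [happ]
      constructor
      · exact hKconv hxK hx₀K hμ0.le (by linarith) (by ring)
      · simp only [Set.mem_setOf_eq, inner_add_right, real_inner_smul_right, hx₀]
        have hxt' : h - t ≤ ⟪u, x⟫ := hxt
        nlinarith
    calc ENNReal.ofReal (μ ^ d) * volume (K ∩ {x | h - t ≤ ⟪u, x⟫})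
        = volume (AffineMap.homothety x₀ μ '' (K ∩ {x | h - t ≤ ⟪u, x⟫})) := by
          rw [Measure.addHaar_image_homothety]
          congr 2
          rw [finrank_euclideanSpace_fin, abs_of_pos (pow_pos hμ0 d)]
      _ ≤ volume (K ∩ {x | h - μ * t ≤ ⟪u, x⟫}) := measure_mono himg
  · -- Part 2
    -- d = n + 1
    have hd0 : d ≠ 0 := by
      rintro rfl
      have : u = 0 := Subsingleton.elim u 0
      rw [this] at hu
      simp at hu
    obtain ⟨n, rfl⟩ : ∃ n, d = n + 1 := ⟨d - 1, (Nat.succ_pred_eq_of_ne_zero hd0).symm⟩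
    -- point of K at depth exactly t
    have hnsub : ¬ K ⊆ {x | h - t ≤ ⟪u, x⟫} := fun hsub => hCne (Set.inter_eq_left.mpr hsub)
    obtain ⟨z₀, hz₀K, hz₀⟩ := Set.not_subset.mp hnsub
    have hz₀' : ⟪u, z₀⟫ < h - t := by
      by_contra hcon
      exact hz₀ (le_of_not_gt hcon)
    have hdenz : t < h - ⟪u, z₀⟫ := by linarith
    have hdenz0 : (0:ℝ) < h - ⟪u, z₀⟫ := by linarith
    set θ : ℝ := t / (h - ⟪u, z₀⟫) with hθ
    have hθ0 : 0 < θ := div_pos ht hdenz0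
    have hθ1 : θ < 1 := (div_lt_one hdenz0).mpr hdenz
    set zpt : EuclideanSpace ℝ (Fin (n+1)) := (1 - θ) • x₀ + θ • z₀ with hzpt
    have hzptK : zpt ∈ K := hKconv hx₀K hz₀K (by linarith) hθ0.le (by ring)
    have hmulθ : θ * (h - ⟪u, z₀⟫) = t := div_mul_cancel₀ t hdenz0.ne'
    have hzptinner : ⟪u, zpt⟫ = h - t := by
      rw [hzpt, inner_add_right, real_inner_smul_right, real_inner_smul_right, hx₀]
      linear_combination -hmulθ
    -- orthonormal basis with b 0 = u
    have hcard : Module.finrank ℝ (EuclideanSpace ℝ (Fin (n+1))) = Fintype.card (Fin (n+1)) := by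
      simp [finrank_euclideanSpace_fin]
    have horth : Orthonormal ℝ (({0} : Set (Fin (n+1))).restrict (fun _ => u)) := by
      constructor
      · intro i; exact hu
      · intro i j hij
        exact absurd (Subsingleton.elim i j) hij
    obtain ⟨b, hb⟩ := Orthonormal.exists_orthonormalBasis_extension_of_card_eq hcard horth
    have hb0 : b 0 = u := hb 0 rfl
    -- the transfer map
    set F : EuclideanSpace ℝ (Fin (n+1)) → ℝ × (Fin n → ℝ) :=
      fun x => (b.repr x 0, fun j => b.repr x (Fin.succAbove 0 j)) with hF
    set Fe : EuclideanSpace ℝ (Fin (n+1)) ≃ᵐ ℝ × (Fin n → ℝ) :=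
      (b.measurableEquiv).trans ((MeasurableEquiv.toLp 2 (Fin (n+1) → ℝ)).symm.trans
        (MeasurableEquiv.piFinSuccAbove (fun _ : Fin (n+1) => ℝ) 0)) with hFe
    have hFeF : ⇑Fe = F := rfl
    have hFmp : MeasurePreserving F volume volume := by
      have h1 := b.measurePreserving_repr
      have h2 := EuclideanSpace.volume_preserving_symm_measurableEquiv_toLp (Fin (n+1))
      have h3 := volume_preserving_piFinSuccAbove (fun _ : Fin (n+1) => ℝ) 0
      exact (h3.comp (h2.comp h1))
    have hFempsymm : MeasurePreserving Fe.symm volume volume := by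
      have : MeasurePreserving Fe volume volume := hFeF ▸ hFmp
      exact this.symm Fe
    have hFinner : ∀ x, (F x).1 = ⟪u, x⟫ := by
      intro x
      show b.repr x 0 = ⟪u, x⟫
      rw [← hb0, b.repr_apply_apply]
    have hFadd : ∀ x y, F (x + y) = F x + F y := fun x y => by
      show (b.repr (x + y) 0, fun j => b.repr (x + y) (Fin.succAbove 0 j)) = _
      rw [LinearIsometryEquiv.map_add]
      refine Prod.ext ?_ ?_
      · simp [hF]
      · funext j; simp [hF]
    have hFsmul : ∀ (c : ℝ) x, F (c • x) = c • F x := fun c x => by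
      show (b.repr (c • x) 0, fun j => b.repr (c • x) (Fin.succAbove 0 j)) = _
      rw [LinearIsometryEquiv.map_smul]
      refine Prod.ext ?_ ?_
      · simp [hF]
      · funext j; simp [hF]
    -- image volume
    have hKMeasE : MeasurableSet K := hKcomp.isClosed.measurableSet
    have hhalfE : ∀ c : ℝ, MeasurableSet {x : EuclideanSpace ℝ (Fin (n+1)) | c ≤ ⟪u, x⟫} :=
      fun c => measurableSet_le measurable_const
        (Continuous.measurable (continuous_const.inner continuous_id))
    have himgvol : ∀ S : Set (EuclideanSpace ℝ (Fin (n+1))), MeasurableSet S →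
        volume (F '' S) = volume S := by
      intro S hS
      have : F '' S = Fe.symm ⁻¹' S := by
        rw [← hFeF]
        exact Equiv.image_eq_preimage_symm Fe.toEquiv S
      rw [this, hFempsymm.measure_preimage hS.nullMeasurableSet]
    -- splitting images
    have himgsplit : ∀ c : ℝ, F '' (K ∩ {x | c ≤ ⟪u, x⟫}) = (F '' K) ∩ {p | c ≤ p.1} := by
      intro c
      ext p
      constructor
      · rintro ⟨x, ⟨hxK, hxc⟩, rfl⟩
        refine ⟨⟨x, hxK, rfl⟩, ?_⟩
        show c ≤ (F x).1
        rw [hFinner]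
        exact hxc
      · rintro ⟨⟨x, hxK, rfl⟩, hc⟩
        refine ⟨x, ⟨hxK, ?_⟩, rfl⟩
        have : c ≤ (F x).1 := hc
        rwa [hFinner] at this
    -- hypotheses of core
    have hK'm : MeasurableSet (F '' K) := by
      have : F '' K = Fe.symm ⁻¹' K := by
        rw [← hFeF]; exact Equiv.image_eq_preimage_symm Fe.toEquiv K
      rw [this]
      exact Fe.symm.measurable hKMeasE
    have hK'conv : Convex ℝ (F '' K) := by
      rintro _ ⟨p, hp, rfl⟩ _ ⟨q, hq, rfl⟩ a c ha hc hac
      exact ⟨a • p + c • q, hKconv hp hq ha hc hac,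
        by rw [hFadd, hFsmul, hFsmul]⟩
    have hmax' : ∀ p ∈ F '' K, p.1 ≤ h := by
      rintro _ ⟨x, hx, rfl⟩
      rw [hFinner]
      exact hsupp.2 ⟨x, hx, rfl⟩
    have hcore := core n (F '' K) hK'm hK'conv h t μ ht hμ0 hμ1 hmax'
      (F x₀) ⟨x₀, hx₀K, rfl⟩ (by rw [hFinner]; exact hx₀)
      (F zpt) ⟨zpt, hzptK, rfl⟩ (by rw [hFinner]; exact hzptinner)
    have e1 : volume (K ∩ {x | h - μ * t ≤ ⟪u, x⟫}) = volume ((F '' K) ∩ {p | h - μ * t ≤ p.1}) := by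
      rw [← himgsplit, himgvol _ (hKMeasE.inter (hhalfE _))]
    have e2 : volume (K ∩ {x | h - t ≤ ⟪u, x⟫}) = volume ((F '' K) ∩ {p | h - t ≤ p.1}) := by
      rw [← himgsplit, himgvol _ (hKMeasE.inter (hhalfE _))]
    rw [e1, e2]
    convert hcore using 3
    push_cast
    ring
end

section
/- Let $K \subset \mathbb{R}^d$ be a convex body and $x, y \in K$. If the Macbeath regions $M(x, \tfrac{1}{2})$ and $M(y, \tfrac{1}{2})$ intersect, then $M(x,1) \subset M(y,5)$. -/
open MeasureTheory

/-- The Macbeath region `M(z,λ) = z + λ[(K-z) ∩ (z-K)]`. -/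
def Mregion {d : ℕ} (K : Set (EuclideanSpace ℝ (Fin d)))
    (z : EuclideanSpace ℝ (Fin d)) (l : ℝ) : Set (EuclideanSpace ℝ (Fin d)) :=
  {p | ∃ w, z + w ∈ K ∧ z - w ∈ K ∧ p = z + l • w}

private lemma combo4 {d : ℕ} {K : Set (EuclideanSpace ℝ (Fin d))} (hK : Convex ℝ K)
    (a b c e : ℝ) (P Q R S : EuclideanSpace ℝ (Fin d))
    (ha : 0 ≤ a) (hb : 0 ≤ b) (hc : 0 ≤ c) (he : 0 ≤ e) (hsum : a + b + c + e = 1)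
    (hP : P ∈ K) (hQ : Q ∈ K) (hR : R ∈ K) (hS : S ∈ K) :
    a • P + b • Q + c • R + e • S ∈ K := by
  have := hK.sum_mem (t := Finset.univ) (w := ![a, b, c, e]) (z := ![P, Q, R, S])
    (by intro i _; fin_cases i <;> assumption)
    (by simp [Fin.sum_univ_four, hsum])
    (by intro i _; fin_cases i <;> assumption)
  simpa [Fin.sum_univ_four, add_assoc] using this

/-- If `M(x,1/2) ∩ M(y,1/2) ≠ ∅` then `M(x,1) ⊆ M(y,5)`. -/
theorem stmt3 {d : ℕ} (K : Set (EuclideanSpace ℝ (Fin d)))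
    (hKconv : Convex ℝ K) (hKcomp : IsCompact K) (hKint : (interior K).Nonempty)
    (x y : EuclideanSpace ℝ (Fin d)) (hx : x ∈ K) (hy : y ∈ K)
    (hmeet : (Mregion K x (1/2) ∩ Mregion K y (1/2)).Nonempty) :
    Mregion K x 1 ⊆ Mregion K y 5 := by
  obtain ⟨p, ⟨w, hc1, hc2, hp1⟩, ⟨v, hd1, hd2, hp2⟩⟩ := hmeet
  intro q hq
  obtain ⟨u, hu1, hu2, hqeq⟩ := hq
  have hrel : x + (1/2 : ℝ) • w = y + (1/2 : ℝ) • v := by rw [← hp1, ← hp2]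
  have hyeq : y = x + (1/2 : ℝ) • w - (1/2 : ℝ) • v := eq_sub_of_add_eq hrel.symm
  refine ⟨(1/10 : ℝ) • ((2:ℝ) • u + v - w), ?_, ?_, ?_⟩
  · have h := combo4 hKconv (1/5) (4/15) (4/15) (4/15) (x + u) (x + w) (y - v) x
      (by norm_num) (by norm_num) (by norm_num) (by norm_num) (by norm_num)
      hu1 hc1 hd2 hx
    have heq : y + (1/10 : ℝ) • ((2:ℝ) • u + v - w)
        = (1/5 : ℝ) • (x + u) + (4/15 : ℝ) • (x + w) + (4/15 : ℝ) • (y - v)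
          + (4/15 : ℝ) • x := by
      rw [hyeq]; module
    rw [heq]; exact h
  · have h := combo4 hKconv (1/5) (2/5) (2/5) 0 (x - u) (x + w) (y - v) x
      (by norm_num) (by norm_num) (by norm_num) (by norm_num) (by norm_num)
      hu2 hc1 hd2 hx
    have heq : y - (1/10 : ℝ) • ((2:ℝ) • u + v - w)
        = (1/5 : ℝ) • (x - u) + (2/5 : ℝ) • (x + w) + (2/5 : ℝ) • (y - v)
          + (0 : ℝ) • x := by
      rw [hyeq]; module
    rw [heq]; exact h
  · rw [hqeq, hyeq]; module
end

section
/- Let $K \subset \mathbb{R}^d$ be a convex body, $C$ a cap of $K$, $z \in C$, and $\lambda > 0$. Then $K \cap M(z, \lambda) \subset C^{\lambda + 1}$. -/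
open MeasureTheory
open scoped RealInnerProductSpace

/-- For a cap `C = K ∩ {x : ⟪u,x⟫ ≥ h - t}`, `z ∈ C`, and `λ > 0`,
we have `K ∩ M(z,λ) ⊆ C^{λ+1}`. -/
theorem stmt4 {d : ℕ} (K : Set (EuclideanSpace ℝ (Fin d)))
    (hKconv : Convex ℝ K) (hKcomp : IsCompact K) (hKint : (interior K).Nonempty)
    (u : EuclideanSpace ℝ (Fin d)) (hu : ‖u‖ = 1)
    (h : ℝ) (hsupp : IsGreatest ((fun x => ⟪u, x⟫) '' K) h)
    (t : ℝ) (ht : 0 < t)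
    (z : EuclideanSpace ℝ (Fin d)) (hz : z ∈ K ∩ {x | h - t ≤ ⟪u, x⟫})
    (lam : ℝ) (hlam : 0 < lam) :
    K ∩ Mregion K z lam ⊆ K ∩ {x | h - (lam + 1) * t ≤ ⟪u, x⟫} := by
  rintro p ⟨hpK, w, hzw, hzw', rfl⟩
  refine ⟨hpK, ?_⟩
  have h1 : ⟪u, z - w⟫ ≤ h := hsupp.2 ⟨z - w, hzw', rfl⟩
  have hz1 : h - t ≤ ⟪u, z⟫ := hz.2
  have hw : -t ≤ ⟪u, w⟫ := by
    have := inner_sub_right (𝕜 := ℝ) u z w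
    linarith [this ▸ h1]
  simp only [Set.mem_setOf_eq, inner_add_right, inner_smul_right]
  nlinarith
end

section
/- Let $K \subset \mathbb{R}^d$ be a convex body of volume $1$ and let $v(z) = \min\{V(K \cap H) : H \text{ a closed half-space with } z \in H\}$. If $C$ is a cap of $K$ whose bounding hyperplane is tangent to the floating body $K(v \geq s) = \{z \in K : v(z) \geq s\}$, then $s \leq V(C) \leq ds$. -/
open MeasureTheory
open scoped RealInnerProductSpace

/-- The minimal cap volume function `v(z) = min{V(K ∩ H) : H a closed half-space, z ∈ H}`. -/
noncomputable def vfun {d : ℕ} (K : Set (EuclideanSpace ℝ (Fin d)))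
    (z : EuclideanSpace ℝ (Fin d)) : ℝ :=
  sInf {r | ∃ (u : EuclideanSpace ℝ (Fin d)) (c : ℝ), u ≠ 0 ∧ c ≤ ⟪u, z⟫ ∧
    r = (volume (K ∩ {x | c ≤ ⟪u, x⟫})).toReal}

namespace Stmt6Aux

open Filter
open scoped Topology

variable {d : ℕ}

lemma vfun_le (K : Set (EuclideanSpace ℝ (Fin d))) (z w : EuclideanSpace ℝ (Fin d))
    (hw : w ≠ 0) (c' : ℝ) (hc : c' ≤ ⟪w, z⟫) :
    vfun K z ≤ (volume (K ∩ {x | c' ≤ ⟪w, x⟫})).toReal := by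
  apply csInf_le
  · refine ⟨0, ?_⟩
    rintro r ⟨u, c, _, _, rfl⟩
    exact ENNReal.toReal_nonneg
  · exact ⟨w, c', hw, hc, rfl⟩

lemma null_hyperplane (w : EuclideanSpace ℝ (Fin d)) (hw : w ≠ 0) (c : ℝ) :
    volume {x : EuclideanSpace ℝ (Fin d) | ⟪w, x⟫ = c} = 0 := by
  set x0 : EuclideanSpace ℝ (Fin d) := (c / ‖w‖ ^ 2) • w with hx0
  have hsub : {x : EuclideanSpace ℝ (Fin d) | ⟪w, x⟫ = c} ⊆
      (AffineSubspace.mk' x0 (ℝ ∙ w)ᗮ : Set (EuclideanSpace ℝ (Fin d))) := by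
    intro x hx
    rw [SetLike.mem_coe, AffineSubspace.mem_mk',
      Submodule.mem_orthogonal_singleton_iff_inner_right]
    have hxw : ⟪w, x0⟫ = c := by
      rw [hx0, real_inner_smul_right, real_inner_self_eq_norm_sq]
      field_simp [norm_ne_zero_iff.2 hw]
    have : (x : EuclideanSpace ℝ (Fin d)) -ᵥ x0 = x - x0 := rfl
    rw [this, inner_sub_right, hx, hxw, sub_self]
  refine measure_mono_null hsub ?_
  apply Measure.addHaar_affineSubspace
  intro htop
  have : w ∈ (ℝ ∙ w)ᗮ := by
    have := AffineSubspace.direction_mk' x0 (ℝ ∙ w)ᗮ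
    rw [htop, AffineSubspace.direction_top] at this
    rw [← this]; trivial
  have h0 : ⟪w, w⟫ = 0 := Submodule.mem_orthogonal_singleton_iff_inner_right.mp this
  rw [real_inner_self_eq_norm_sq] at h0
  exact hw (by simpa using norm_eq_zero.1 (by nlinarith [norm_nonneg w]))

lemma limit_caps (K : Set (EuclideanSpace ℝ (Fin d))) (hKfin : volume K ≠ ⊤)
    {w : EuclideanSpace ℝ (Fin d)} (hw : w ≠ 0) {c : ℝ}
    (ws : ℕ → EuclideanSpace ℝ (Fin d)) (cs : ℕ → ℝ)
    (hws : Tendsto ws atTop (𝓝 w)) (hcs : Tendsto cs atTop (𝓝 c))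
    {b : ℝ} (hb : 0 ≤ b)
    (hvol : ∀ n, (volume (K ∩ {x | cs n ≤ ⟪ws n, x⟫})).toReal ≤ b) :
    (volume (K ∩ {x | c ≤ ⟪w, x⟫})).toReal ≤ b := by
  set A : ℕ → Set (EuclideanSpace ℝ (Fin d)) := fun n => K ∩ {x | cs n ≤ ⟪ws n, x⟫} with hA
  set D : ℕ → Set (EuclideanSpace ℝ (Fin d)) := fun N => ⋂ (n) (_ : N ≤ n), A n with hD
  have hvolA : ∀ n, volume (A n) ≤ ENNReal.ofReal b := fun n =>
    (ENNReal.le_ofReal_iff_toReal_le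
      (ne_top_of_le_ne_top hKfin (measure_mono Set.inter_subset_left)) hb).2 (hvol n)
  have hDmono : Monotone D := by
    intro N M hNM
    exact Set.iInter₂_mono' fun n hn => ⟨n, le_trans hNM hn, le_rfl⟩
  have hsub : K ∩ {x | c < ⟪w, x⟫} ⊆ ⋃ N, D N := by
    rintro x ⟨hxK, hxc⟩
    have htend : Tendsto (fun n => ⟪ws n, x⟫ - cs n) atTop (𝓝 (⟪w, x⟫ - c)) :=
      (hws.inner tendsto_const_nhds).sub hcs
    have hev : ∀ᶠ n in atTop, 0 < ⟪ws n, x⟫ - cs n :=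
      htend.eventually (eventually_gt_nhds (sub_pos.2 hxc))
    obtain ⟨N, hN⟩ := eventually_atTop.1 hev
    exact Set.mem_iUnion.2 ⟨N, Set.mem_iInter₂.2 fun n hn => ⟨hxK, le_of_lt (sub_pos.1 (hN n hn))⟩⟩
  have h1 : volume (K ∩ {x | c < ⟪w, x⟫}) ≤ ENNReal.ofReal b := by
    calc volume (K ∩ {x | c < ⟪w, x⟫}) ≤ volume (⋃ N, D N) := measure_mono hsub
      _ = ⨆ N, volume (D N) := hDmono.directed_le.measure_iUnion
      _ ≤ ENNReal.ofReal b := iSup_le fun N =>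
          le_trans (measure_mono (Set.iInter₂_subset N le_rfl)) (hvolA N)
  have hsplit : K ∩ {x | c ≤ ⟪w, x⟫} ⊆ (K ∩ {x | c < ⟪w, x⟫}) ∪ {x | ⟪w, x⟫ = c} := by
    rintro x ⟨hxK, hxc⟩
    have hxc' : c ≤ ⟪w, x⟫ := hxc
    rcases lt_or_eq_of_le hxc' with h | h
    · exact Or.inl ⟨hxK, h⟩
    · exact Or.inr h.symm
  refine ENNReal.toReal_le_of_le_ofReal hb ?_
  calc volume (K ∩ {x | c ≤ ⟪w, x⟫})
      ≤ volume ((K ∩ {x | c < ⟪w, x⟫}) ∪ {x | ⟪w, x⟫ = c}) := measure_mono hsplit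
    _ ≤ volume (K ∩ {x | c < ⟪w, x⟫}) + volume {x | ⟪w, x⟫ = c} := measure_union_le _ _
    _ ≤ ENNReal.ofReal b := by rw [null_hyperplane w hw c, add_zero]; exact h1

def Wset (K : Set (EuclideanSpace ℝ (Fin d))) (s : ℝ) (z0 : EuclideanSpace ℝ (Fin d)) :
    Set (EuclideanSpace ℝ (Fin d)) :=
  {w | ‖w‖ = 1 ∧ (volume (K ∩ {x | ⟪w, z0⟫ ≤ ⟪w, x⟫})).toReal ≤ s}

lemma Wset_compact (K : Set (EuclideanSpace ℝ (Fin d))) (hKfin : volume K ≠ ⊤)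
    {s : ℝ} (hs : 0 ≤ s) (z0 : EuclideanSpace ℝ (Fin d)) : IsCompact (Wset K s z0) := by
  have hclosed : IsClosed (Wset K s z0) := by
    apply IsSeqClosed.isClosed
    intro x p hx hxp
    have hnorm : ‖p‖ = 1 := by
      have : Tendsto (fun n => ‖x n‖) atTop (𝓝 ‖p‖) := hxp.norm
      have h1 : Tendsto (fun _ : ℕ => (1 : ℝ)) atTop (𝓝 ‖p‖) := by
        convert this using 2 with n
        exact ((hx n).1).symm
      exact (tendsto_nhds_unique tendsto_const_nhds h1).symm
    have hp0 : p ≠ 0 := by intro h; rw [h, norm_zero] at hnorm; norm_num at hnorm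
    refine ⟨hnorm, ?_⟩
    exact limit_caps K hKfin hp0 x (fun n => ⟪x n, z0⟫) hxp
      (hxp.inner tendsto_const_nhds) hs (fun n => (hx n).2)
  apply Metric.isCompact_of_isClosed_isBounded hclosed
  apply (Metric.isBounded_closedBall (x := (0 : EuclideanSpace ℝ (Fin d))) (r := 1)).subset
  intro w hw
  simpa [Metric.mem_closedBall, dist_eq_norm] using le_of_eq (hw.1)

def Sset (K : Set (EuclideanSpace ℝ (Fin d))) (s : ℝ) (z0 : EuclideanSpace ℝ (Fin d)) :
    Set (EuclideanSpace ℝ (Fin d)) :=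
  {v | ∃ (m : ℕ) (wf : Fin m → EuclideanSpace ℝ (Fin d)) (lam : Fin m → ℝ),
    (∀ i, wf i ∈ Wset K s z0) ∧ (∀ i, 0 ≤ lam i) ∧ v = ∑ i, lam i • wf i}

lemma Sset_zero (K : Set (EuclideanSpace ℝ (Fin d))) (s : ℝ) (z0 : EuclideanSpace ℝ (Fin d)) :
    (0 : EuclideanSpace ℝ (Fin d)) ∈ Sset K s z0 :=
  ⟨0, Fin.elim0, Fin.elim0, fun i => i.elim0, fun i => i.elim0, by simp⟩

lemma Wset_sub_Sset (K : Set (EuclideanSpace ℝ (Fin d))) (s : ℝ) (z0 : EuclideanSpace ℝ (Fin d)) :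
    Wset K s z0 ⊆ Sset K s z0 := by
  intro w hw
  exact ⟨1, fun _ => w, fun _ => 1, fun _ => hw, fun _ => zero_le_one, by simp⟩

lemma Sset_smul (K : Set (EuclideanSpace ℝ (Fin d))) (s : ℝ) (z0 : EuclideanSpace ℝ (Fin d))
    {r : ℝ} (hr : 0 ≤ r) {v : EuclideanSpace ℝ (Fin d)} (hv : v ∈ Sset K s z0) :
    r • v ∈ Sset K s z0 := by
  obtain ⟨m, wf, lam, hmem, hnn, rfl⟩ := hv
  refine ⟨m, wf, fun i => r * lam i, hmem, fun i => mul_nonneg hr (hnn i), ?_⟩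
  rw [Finset.smul_sum]
  simp [smul_smul]

lemma Sset_add (K : Set (EuclideanSpace ℝ (Fin d))) (s : ℝ) (z0 : EuclideanSpace ℝ (Fin d))
    {v1 v2 : EuclideanSpace ℝ (Fin d)} (h1 : v1 ∈ Sset K s z0) (h2 : v2 ∈ Sset K s z0) :
    v1 + v2 ∈ Sset K s z0 := by
  obtain ⟨m1, wf1, lam1, hmem1, hnn1, rfl⟩ := h1
  obtain ⟨m2, wf2, lam2, hmem2, hnn2, rfl⟩ := h2
  refine ⟨m1 + m2, Fin.addCases wf1 wf2, Fin.addCases lam1 lam2, ?_, ?_, ?_⟩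
  · intro i
    refine Fin.addCases (fun j => ?_) (fun j => ?_) i <;> simp [hmem1, hmem2]
  · intro i
    refine Fin.addCases (fun j => ?_) (fun j => ?_) i <;> simp [hnn1, hnn2]
  · rw [Fin.sum_univ_add]
    congr 1 <;> [skip; skip] <;> apply Finset.sum_congr rfl <;> intro j _ <;> simp

lemma Sset_convex (K : Set (EuclideanSpace ℝ (Fin d))) (s : ℝ) (z0 : EuclideanSpace ℝ (Fin d)) :
    Convex ℝ (Sset K s z0) := by
  intro x hx y hy a b ha hb hab
  exact Sset_add K s z0 (Sset_smul K s z0 ha hx) (Sset_smul K s z0 hb hy)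

def TCset (K : Set (EuclideanSpace ℝ (Fin d))) (z0 : EuclideanSpace ℝ (Fin d)) :
    Set (EuclideanSpace ℝ (Fin d)) :=
  {v | ∃ r : ℝ, 0 ≤ r ∧ ∃ k ∈ K, v = r • (k - z0)}

lemma TCset_convex (K : Set (EuclideanSpace ℝ (Fin d))) (hKconv : Convex ℝ K)
    (z0 : EuclideanSpace ℝ (Fin d)) : Convex ℝ (TCset K z0) := by
  intro x hx y hy a b ha hb hab
  obtain ⟨r1, hr1, k1, hk1, rfl⟩ := hx
  obtain ⟨r2, hr2, k2, hk2, rfl⟩ := hy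
  rcases eq_or_lt_of_le (add_nonneg (mul_nonneg ha hr1) (mul_nonneg hb hr2)) with h0 | hpos
  · -- a*r1 + b*r2 = 0 hence both zero
    have h1 : a * r1 = 0 := by nlinarith [mul_nonneg ha hr1, mul_nonneg hb hr2]
    have h2 : b * r2 = 0 := by nlinarith [mul_nonneg ha hr1, mul_nonneg hb hr2]
    refine ⟨0, le_rfl, k1, hk1, ?_⟩
    rw [smul_smul, smul_smul, h1, h2]
    simp
  · set ρ := a * r1 + b * r2 with hρ
    refine ⟨ρ, le_of_lt hpos, (a * r1 / ρ) • k1 + (b * r2 / ρ) • k2,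
      hKconv hk1 hk2 (by positivity) (by positivity) (by field_simp; exact hρ.symm), ?_⟩
    have hρ0 : ρ ≠ 0 := ne_of_gt hpos
    match_scalars <;> field_simp <;> rw [hρ] <;> ring

lemma mem_closure_TC (K : Set (EuclideanSpace ℝ (Fin d))) (hKconv : Convex ℝ K)
    {z0 : EuclideanSpace ℝ (Fin d)} (hz0K : z0 ∈ K) {s : ℝ} (hs0 : 0 ≤ s)
    (y : EuclideanSpace ℝ (Fin d)) (hy : ∀ w ∈ Wset K s z0, ⟪w, y⟫ ≤ 0) :
    y ∈ closure (TCset K z0) := by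
  by_contra hyc
  obtain ⟨f, α, hfa, hαy⟩ := geometric_hahn_banach_closed_point
    ((TCset_convex K hKconv z0).closure) isClosed_closure hyc
  have h0 : (0:ℝ) < α := by
    have hm : (0 : EuclideanSpace ℝ (Fin d)) ∈ TCset K z0 := ⟨0, le_rfl, z0, hz0K, by simp⟩
    have := hfa 0 (subset_closure hm); simpa using this
  have hfK : ∀ k ∈ K, f (k - z0) ≤ 0 := by
    intro k hk
    by_contra hpos
    push_neg at hpos
    have hr : ∀ r : ℝ, 0 ≤ r → r * f (k - z0) < α := by
      intro r hr0
      have hm : (r • (k - z0)) ∈ TCset K z0 := ⟨r, hr0, k, hk, rfl⟩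
      have := hfa _ (subset_closure hm)
      rwa [_root_.map_smul, smul_eq_mul] at this
    have h2 := hr ((α + 1) / f (k - z0)) (by positivity)
    rw [div_mul_cancel₀ _ (ne_of_gt hpos)] at h2
    linarith
  set ν := (InnerProductSpace.toDual ℝ (EuclideanSpace ℝ (Fin d))).symm f with hν
  have hνx : ∀ x, ⟪ν, x⟫ = f x := fun x => InnerProductSpace.toDual_symm_apply
  have hνy : 0 < ⟪ν, y⟫ := by rw [hνx]; linarith
  have hν0 : ν ≠ 0 := by
    intro h; rw [h, inner_zero_left] at hνy; simpa using hνy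
  set w := ‖ν‖⁻¹ • ν with hw
  have hnν : (0:ℝ) < ‖ν‖⁻¹ := by
    have := norm_pos_iff.2 hν0; positivity
  have hwW : w ∈ Wset K s z0 := by
    constructor
    · rw [hw, norm_smul, Real.norm_eq_abs, abs_of_pos hnν,
        inv_mul_cancel₀ (ne_of_gt (norm_pos_iff.2 hν0))]
    · have hsub : K ∩ {x | ⟪w, z0⟫ ≤ ⟪w, x⟫} ⊆ {x | ⟪w, x⟫ = ⟪w, z0⟫} := by
        rintro x ⟨hxK, hxc⟩
        have hxc' : ⟪w, z0⟫ ≤ ⟪w, x⟫ := hxc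
        have h1 : ⟪ν, x - z0⟫ ≤ 0 := by rw [hνx]; exact hfK x hxK
        rw [inner_sub_right] at h1
        have h2 : ⟪w, x⟫ - ⟪w, z0⟫ ≤ 0 := by
          rw [hw, real_inner_smul_left, real_inner_smul_left]
          nlinarith
        show ⟪w, x⟫ = ⟪w, z0⟫
        linarith
      have : volume (K ∩ {x | ⟪w, z0⟫ ≤ ⟪w, x⟫}) = 0 := by
        refine measure_mono_null hsub ?_
        apply null_hyperplane
        rw [hw]
        intro hcon
        rw [smul_eq_zero] at hcon
        rcases hcon with h | h
        · exact absurd h (ne_of_gt hnν)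
        · exact hν0 h
      rw [this]; simpa using hs0
  have := hy w hwW
  rw [hw, real_inner_smul_left] at this
  nlinarith

lemma approach (K : Set (EuclideanSpace ℝ (Fin d))) (hKconv : Convex ℝ K)
    {z0 : EuclideanSpace ℝ (Fin d)} (hz0K : z0 ∈ K)
    {q : EuclideanSpace ℝ (Fin d)} {ρ : ℝ} (hρ : 0 < ρ) (hball : Metric.ball q ρ ⊆ K)
    {y : EuclideanSpace ℝ (Fin d)} (hy : y ∈ closure (TCset K z0)) {ε : ℝ} (hε : 0 < ε) :
    ∃ τ : ℝ, 0 < τ ∧ ∀ t : ℝ, 0 < t → t ≤ τ → z0 + t • (y + ε • (q - z0)) ∈ K := by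
  obtain ⟨v, hvTC, hvy⟩ := Metric.mem_closure_iff.1 hy (ε * ρ / 2) (by positivity)
  obtain ⟨r, hr0, k, hk, rfl⟩ := hvTC
  set δ := y - r • (k - z0) with hδ
  have hδn : ‖δ‖ < ε * ρ / 2 := by rw [hδ, ← dist_eq_norm]; exact hvy
  set q' := q + ε⁻¹ • δ with hq'
  have hq'K : q' ∈ K := by
    apply hball
    rw [Metric.mem_ball, dist_eq_norm]
    have h1 : q' - q = ε⁻¹ • δ := by rw [hq']; abel
    rw [h1, norm_smul, Real.norm_eq_abs, abs_of_pos (by positivity : (0:ℝ) < ε⁻¹)]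
    calc ε⁻¹ * ‖δ‖ < ε⁻¹ * (ε * ρ / 2) := by
          apply mul_lt_mul_of_pos_left hδn (by positivity)
      _ = ρ / 2 := by field_simp
      _ < ρ := by linarith
  refine ⟨(r + ε + 1)⁻¹, by positivity, ?_⟩
  intro t ht0 htτ
  set a := t * r with ha
  set b := t * ε with hb
  have hb0 : 0 < b := by positivity
  have ha0 : 0 ≤ a := by positivity
  have hab1 : a + b < 1 := by
    have h1 : t * (r + ε) ≤ (r + ε + 1)⁻¹ * (r + ε) := by
      apply mul_le_mul_of_nonneg_right htτ (by positivity)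
    have h2 : (r + ε + 1)⁻¹ * (r + ε) < 1 := by
      rw [inv_mul_lt_iff₀ (by positivity)]
      linarith
    rw [ha, hb]
    nlinarith
  have hsum : 0 < a + b := by linarith
  have hp : (a / (a + b)) • k + (b / (a + b)) • q' ∈ K :=
    hKconv hk hq'K (by positivity) (by positivity) (by rw [← add_div, div_self (ne_of_gt hsum)])
  have hfin : z0 + t • (y + ε • (q - z0)) =
      (1 - (a + b)) • z0 + (a + b) • ((a / (a + b)) • k + (b / (a + b)) • q') := by
    rw [hq', hδ, ha, hb]
    match_scalars
    any_goals field_simp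
    any_goals ring
    all_goals simp
  rw [hfin]
  exact hKconv hz0K hp (by linarith) (le_of_lt hsum) (by ring)

lemma exists_W_dir (K : Set (EuclideanSpace ℝ (Fin d))) (hKfin : volume K ≠ ⊤)
    {s c : ℝ} (hs : 0 < s) {u z0 : EuclideanSpace ℝ (Fin d)} (hu : ‖u‖ = 1)
    (hz0v : s ≤ vfun K z0) (hz0c : ⟪u, z0⟫ = c)
    (htang : ∀ x ∈ K, c < ⟪u, x⟫ → vfun K x < s)
    {η : EuclideanSpace ℝ (Fin d)} (hη : 0 < ⟪u, η⟫) {τ : ℝ} (hτ : 0 < τ)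
    (hmem : ∀ t : ℝ, 0 < t → t ≤ τ → z0 + t • η ∈ K) :
    ∃ w ∈ Wset K s z0, 0 ≤ ⟪w, η⟫ := by
  have hu0 : u ≠ 0 := by
    intro h; rw [h, norm_zero] at hu; norm_num at hu
  set tseq : ℕ → ℝ := fun n => τ / (n + 1) with htseq
  have ht0 : ∀ n : ℕ, 0 < tseq n := fun n => by positivity
  have htle : ∀ n : ℕ, tseq n ≤ τ := by
    intro n
    rw [htseq]
    apply div_le_self (le_of_lt hτ)
    have : (0:ℝ) ≤ (n:ℝ) := Nat.cast_nonneg n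
    linarith
  set xseq : ℕ → EuclideanSpace ℝ (Fin d) := fun n => z0 + tseq n • η with hxseq
  have hxK : ∀ n, xseq n ∈ K := fun n => hmem _ (ht0 n) (htle n)
  have hxinner : ∀ n, ⟪u, xseq n⟫ = c + tseq n * ⟪u, η⟫ := by
    intro n
    rw [hxseq]
    simp only [inner_add_right, real_inner_smul_right, hz0c]
  have hxc : ∀ n, c < ⟪u, xseq n⟫ := by
    intro n
    rw [hxinner n]
    have := mul_pos (ht0 n) hη
    linarith
  have hvx : ∀ n, vfun K (xseq n) < s := fun n => htang _ (hxK n) (hxc n)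
  have hex : ∀ n : ℕ, ∃ w' : EuclideanSpace ℝ (Fin d), w' ≠ 0 ∧ ∃ c' : ℝ,
      c' ≤ ⟪w', xseq n⟫ ∧ (volume (K ∩ {x | c' ≤ ⟪w', x⟫})).toReal < s := by
    intro n
    have hne : {r | ∃ (w : EuclideanSpace ℝ (Fin d)) (c' : ℝ), w ≠ 0 ∧ c' ≤ ⟪w, xseq n⟫ ∧
        r = (volume (K ∩ {x | c' ≤ ⟪w, x⟫})).toReal}.Nonempty :=
      ⟨_, u, ⟪u, xseq n⟫, hu0, le_rfl, rfl⟩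
    obtain ⟨r, hrmem, hrs⟩ := exists_lt_of_csInf_lt hne (hvx n)
    obtain ⟨w', c', hw', hc', rfl⟩ := hrmem
    exact ⟨w', hw', c', hc', hrs⟩
  choose w' hw'0 c' hc'le hvols using hex
  set wh : ℕ → EuclideanSpace ℝ (Fin d) := fun n => ‖w' n‖⁻¹ • w' n with hwh
  set ch : ℕ → ℝ := fun n => ‖w' n‖⁻¹ * c' n with hch
  have hnpos : ∀ n, (0:ℝ) < ‖w' n‖⁻¹ := by
    intro n
    have := norm_pos_iff.2 (hw'0 n)
    positivity
  have hwn : ∀ n, ‖wh n‖ = 1 := by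
    intro n
    rw [hwh]
    simp only [norm_smul, Real.norm_eq_abs, abs_of_pos (hnpos n)]
    exact inv_mul_cancel₀ (ne_of_gt (norm_pos_iff.2 (hw'0 n)))
  have hwh0 : ∀ n, wh n ≠ 0 := by
    intro n h
    have := hwn n
    rw [h, norm_zero] at this
    norm_num at this
  have hsetEq : ∀ n, {x : EuclideanSpace ℝ (Fin d) | c' n ≤ ⟪w' n, x⟫} =
      {x | ch n ≤ ⟪wh n, x⟫} := by
    intro n
    ext x
    simp only [Set.mem_setOf_eq, hwh, hch, real_inner_smul_left]
    exact (mul_le_mul_iff_right₀ (hnpos n)).symm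
  have hineq : ∀ n, ch n ≤ ⟪wh n, xseq n⟫ := by
    intro n
    rw [hwh, hch, real_inner_smul_left]
    exact mul_le_mul_of_nonneg_left (hc'le n) (le_of_lt (hnpos n))
  have hz0lt : ∀ n, ⟪wh n, z0⟫ < ch n := by
    intro n
    by_contra hcon
    push_neg at hcon
    have h1 := vfun_le K z0 (wh n) (hwh0 n) (ch n) hcon
    rw [← hsetEq n] at h1
    linarith [hvols n]
  have hinner_pos : ∀ n, 0 < ⟪wh n, η⟫ := by
    intro n
    have h1 := hineq n
    have h2 : ⟪wh n, xseq n⟫ = ⟪wh n, z0⟫ + tseq n * ⟪wh n, η⟫ := by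
      simp only [hxseq, inner_add_right, real_inner_smul_right]
    rw [h2] at h1
    have h3 := hz0lt n
    have h4 : 0 < tseq n * ⟪wh n, η⟫ := by linarith
    by_contra hcon
    push_neg at hcon
    have h5 := mul_nonpos_of_nonneg_of_nonpos (le_of_lt (ht0 n)) hcon
    linarith
  have hgap : ∀ n, ch n - ⟪wh n, z0⟫ ≤ tseq n * ‖η‖ := by
    intro n
    have h1 := hineq n
    have h2 : ⟪wh n, xseq n⟫ = ⟪wh n, z0⟫ + tseq n * ⟪wh n, η⟫ := by
      simp only [hxseq, inner_add_right, real_inner_smul_right]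
    have h3 : ⟪wh n, η⟫ ≤ ‖η‖ := by
      have := real_inner_le_norm (wh n) η
      rwa [hwn n, one_mul] at this
    have h4 : tseq n * ⟪wh n, η⟫ ≤ tseq n * ‖η‖ :=
      mul_le_mul_of_nonneg_left h3 (le_of_lt (ht0 n))
    rw [h2] at h1
    linarith
  obtain ⟨w, hwsph, φ, hφ, hconv⟩ := (isCompact_sphere (0 : EuclideanSpace ℝ (Fin d)) 1).tendsto_subseq
    (fun n => mem_sphere_zero_iff_norm.2 (hwn n))
  have hw1 : ‖w‖ = 1 := mem_sphere_zero_iff_norm.1 hwsph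
  have hw0 : w ≠ 0 := by
    intro h; rw [h, norm_zero] at hw1; norm_num at hw1
  have htz : Tendsto (fun n => tseq (φ n)) atTop (𝓝 0) := by
    have h1 : Tendsto tseq atTop (𝓝 0) := by
      rw [htseq]
      have := tendsto_one_div_add_atTop_nhds_zero_nat (𝕜 := ℝ)
      have h2 := this.const_mul τ
      rw [mul_zero] at h2
      convert h2 using 2 with n
      field_simp
    exact h1.comp hφ.tendsto_atTop
  have hinz : Tendsto (fun n => ⟪wh (φ n), z0⟫) atTop (𝓝 ⟪w, z0⟫) :=
    (hconv.inner tendsto_const_nhds)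
  have hgap2 : Tendsto (fun n => ch (φ n) - ⟪wh (φ n), z0⟫) atTop (𝓝 0) := by
    apply squeeze_zero (fun n => le_of_lt (sub_pos.2 (hz0lt (φ n))))
      (fun n => hgap (φ n))
    have := htz.mul_const ‖η‖
    rwa [zero_mul] at this
  have hcht : Tendsto (fun n => ch (φ n)) atTop (𝓝 ⟪w, z0⟫) := by
    have := hinz.add hgap2
    rw [add_zero] at this
    convert this using 2 with n
    ring
  have hbound := limit_caps K hKfin hw0 (fun n => wh (φ n)) (fun n => ch (φ n))
    hconv hcht (le_of_lt hs) (fun n => by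
      rw [← hsetEq (φ n)]
      exact le_of_lt (hvols (φ n)))
  refine ⟨w, ⟨hw1, hbound⟩, ?_⟩
  have hlim : Tendsto (fun n => ⟪wh (φ n), η⟫) atTop (𝓝 ⟪w, η⟫) :=
    hconv.inner tendsto_const_nhds
  exact ge_of_tendsto' hlim fun n => (hinner_pos (φ n)).le

lemma conic_caratheodory (W : Set (EuclideanSpace ℝ (Fin d))) :
    ∀ (m : ℕ) (wf : Fin m → EuclideanSpace ℝ (Fin d)) (lam : Fin m → ℝ),
    (∀ i, wf i ∈ W) → (∀ i, 0 ≤ lam i) →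
    ∃ (k : ℕ) (wg : Fin k → EuclideanSpace ℝ (Fin d)) (mu : Fin k → ℝ),
      k ≤ d ∧ (∀ i, wg i ∈ W) ∧ (∀ i, 0 ≤ mu i) ∧
      ∑ i, mu i • wg i = ∑ i, lam i • wf i := by
  intro m
  induction m with
  | zero =>
    intro wf lam hmem hnn
    exact ⟨0, Fin.elim0, Fin.elim0, Nat.zero_le d, fun i => i.elim0, fun i => i.elim0, by simp⟩
  | succ m ih =>
    intro wf lam hmem hnn
    by_cases hm : m + 1 ≤ d
    · exact ⟨m + 1, wf, lam, hm, hmem, hnn, rfl⟩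
    · have hdep : ¬ LinearIndependent ℝ wf := by
        intro hli
        have h1 := hli.fintype_card_le_finrank
        rw [finrank_euclideanSpace_fin, Fintype.card_fin] at h1
        omega
      obtain ⟨g0, hg0sum, hg0ne⟩ := Fintype.not_linearIndependent_iff.1 hdep
      obtain ⟨g, hgsum, hgpos⟩ : ∃ g : Fin (m + 1) → ℝ,
          ∑ i, g i • wf i = 0 ∧ ∃ i, 0 < g i := by
        obtain ⟨i1, hi1⟩ := hg0ne
        rcases lt_or_gt_of_ne hi1 with h | h
        · refine ⟨-g0, ?_, i1, by simpa using h⟩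
          rw [← neg_zero, ← hg0sum, ← Finset.sum_neg_distrib]
          exact Finset.sum_congr rfl fun i _ => by rw [Pi.neg_apply, neg_smul]
        · exact ⟨g0, hg0sum, i1, h⟩
      set P := Finset.univ.filter (fun i => 0 < g i) with hP
      have hPne : P.Nonempty := by
        obtain ⟨i1, hi1⟩ := hgpos
        exact ⟨i1, by simp [hP, hi1]⟩
      obtain ⟨i0, hi0P, hi0min⟩ := Finset.exists_min_image P (fun i => lam i / g i) hPne
      have hgi0 : 0 < g i0 := by
        have := Finset.mem_filter.1 hi0P
        exact this.2
      set τ := lam i0 / g i0 with hτ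
      have hτ0 : 0 ≤ τ := div_nonneg (hnn i0) (le_of_lt hgi0)
      set lam' := fun i => lam i - τ * g i with hlam'def
      have hlam' : ∀ i, 0 ≤ lam' i := by
        intro i
        rw [hlam'def]
        by_cases hgi : 0 < g i
        · have hmin := hi0min i (Finset.mem_filter.2 ⟨Finset.mem_univ i, hgi⟩)
          have h2 : τ * g i ≤ lam i := by
            rw [hτ, ← le_div_iff₀ hgi]
            exact hmin
          simp only []
          linarith
        · push_neg at hgi
          have : τ * g i ≤ 0 := mul_nonpos_of_nonneg_of_nonpos hτ0 hgi
          have := hnn i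
          simp only []
          linarith
      have hlam'i0 : lam' i0 = 0 := by
        rw [hlam'def, hτ]
        simp only []
        rw [div_mul_cancel₀ _ (ne_of_gt hgi0)]
        ring
      have hsum' : ∑ i, lam' i • wf i = ∑ i, lam i • wf i := by
        simp only [hlam'def, sub_smul]
        rw [Finset.sum_sub_distrib]
        have h3 : ∑ i, (τ * g i) • wf i = τ • ∑ i, g i • wf i := by
          rw [Finset.smul_sum]
          exact Finset.sum_congr rfl fun i _ => by rw [smul_smul]
        rw [h3, hgsum, smul_zero, sub_zero]
      obtain ⟨k, wg, mu, hk, h1, h2, h3⟩ := ih (wf ∘ i0.succAbove) (fun j => lam' (i0.succAbove j))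
        (fun j => hmem _) (fun j => hlam' _)
      refine ⟨k, wg, mu, hk, h1, h2, ?_⟩
      rw [h3, ← hsum', Fin.sum_univ_succAbove (fun i => lam' i • wf i) i0, hlam'i0, zero_smul,
        zero_add]
      rfl

lemma isCompact_convexHull {A : Set (EuclideanSpace ℝ (Fin d))} (hA : IsCompact A) :
    IsCompact (convexHull ℝ A) := by
  rcases A.eq_empty_or_nonempty with rfl | ⟨a0, ha0⟩
  · simp
  set f : (Fin (d + 1) → ℝ) × (Fin (d + 1) → EuclideanSpace ℝ (Fin d)) →
      EuclideanSpace ℝ (Fin d) := fun p => ∑ i, p.1 i • p.2 i with hf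
  have hcont : Continuous f := by
    apply continuous_finset_sum
    intro i _
    exact ((continuous_apply i).comp continuous_fst).smul
      ((continuous_apply i).comp continuous_snd)
  have hTcomp : IsCompact ((stdSimplex ℝ (Fin (d + 1))) ×ˢ
      (Set.univ.pi fun _ : Fin (d + 1) => A)) :=
    (isCompact_stdSimplex ℝ _).prod (isCompact_univ_pi fun _ => hA)
  have himage : convexHull ℝ A =
      f '' ((stdSimplex ℝ (Fin (d + 1))) ×ˢ (Set.univ.pi fun _ : Fin (d + 1) => A)) := by
    apply Set.Subset.antisymm
    · intro x hx
      rw [convexHull_eq_union] at hx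
      simp only [Set.mem_iUnion] at hx
      obtain ⟨t, hts, hai, hxt⟩ := hx
      have htne : t.Nonempty := by
        rcases t.eq_empty_or_nonempty with rfl | h
        · simp at hxt
        · exact h
      obtain ⟨y0, hy0⟩ := htne
      have hkle : t.card ≤ d + 1 := by
        have h1 := hai.card_le_finrank_succ
        have h2 : Module.finrank ℝ (vectorSpan ℝ
            (Set.range (Subtype.val : t → EuclideanSpace ℝ (Fin d)))) ≤ d := by
          have h3 := Submodule.finrank_le (vectorSpan ℝ
            (Set.range (Subtype.val : t → EuclideanSpace ℝ (Fin d))))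
          rwa [finrank_euclideanSpace_fin] at h3
        rw [Fintype.card_coe] at h1
        omega
      rw [Finset.convexHull_eq] at hxt
      obtain ⟨wgt, hwnn, hwsum, hcm⟩ := hxt
      set k := t.card with hk
      set e := t.equivFin with he
      set el : Fin k → EuclideanSpace ℝ (Fin d) := fun j => ((e.symm j : t) : EuclideanSpace ℝ (Fin d)) with hel
      have helmem : ∀ j, el j ∈ t := fun j => (e.symm j).2
      have key : ∀ {M : Type} (_ : AddCommMonoid M) (ψ : EuclideanSpace ℝ (Fin d) → M),
          (∑ i : Fin (d + 1), if h : (i : ℕ) < k then ψ (el ⟨i, h⟩) else 0) =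
          ∑ y ∈ t, ψ y := by
        intro M hM ψ
        have h1 : ∑ i : Fin (d + 1), (if h : (i : ℕ) < k then ψ (el ⟨i, h⟩) else 0) =
            ∑ i ∈ Finset.univ.map (Fin.castLEEmb hkle),
              (if h : (i : ℕ) < k then ψ (el ⟨i, h⟩) else 0) := by
          symm
          apply Finset.sum_subset (Finset.subset_univ _)
          intro i _ hnmem
          rw [dif_neg]
          intro hik
          apply hnmem
          simp only [Finset.mem_map, Finset.mem_univ, true_and]
          exact ⟨⟨i, hik⟩, rfl⟩
        rw [h1, Finset.sum_map]
        have h2 : ∀ j : Fin k, (if h : ((Fin.castLEEmb hkle j : Fin (d+1)) : ℕ) < k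
            then ψ (el ⟨(Fin.castLEEmb hkle j : Fin (d+1)), h⟩) else 0) = ψ (el j) := by
          intro j
          have hco : ((Fin.castLEEmb hkle j : Fin (d+1)) : ℕ) = (j : ℕ) := rfl
          rw [dif_pos (hco ▸ j.2)]
          have h3 : (⟨((Fin.castLEEmb hkle) j : ℕ), hco ▸ j.2⟩ : Fin k) = j := Fin.ext hco
          rw [h3]
        rw [Finset.sum_congr rfl fun j _ => h2 j]
        rw [← Finset.sum_coe_sort t ψ]
        exact Fintype.sum_equiv e.symm _ _ fun j => rfl
      set lam : Fin (d + 1) → ℝ := fun i => if h : (i : ℕ) < k then wgt (el ⟨i, h⟩) else 0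
        with hlam
      set pts : Fin (d + 1) → EuclideanSpace ℝ (Fin d) := fun i =>
        if h : (i : ℕ) < k then el ⟨i, h⟩ else y0 with hpts
      refine ⟨(lam, pts), ⟨⟨?_, ?_⟩, ?_⟩, ?_⟩
      · intro i
        simp only [hlam]
        by_cases h : (i : ℕ) < k
        · rw [dif_pos h]; exact hwnn _ (helmem _)
        · rw [dif_neg h]

      · have hw2 := key inferInstance wgt
        rw [← hwsum, ← hw2]
      · intro i _
        simp only [hpts]
        by_cases h : (i : ℕ) < k
        · rw [dif_pos h]; exact hts (helmem _)
        · rw [dif_neg h]; exact hts hy0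
      · have hkey := key inferInstance (fun y => wgt y • y)
        have hx' : t.centerMass wgt id = ∑ y ∈ t, wgt y • y := by
          rw [Finset.centerMass_eq_of_sum_1 _ _ hwsum]
          simp [id]
        rw [hf]
        simp only []
        rw [← hcm, hx']
        rw [← hkey]
        apply Finset.sum_congr rfl
        intro i _
        simp only [hlam, hpts]
        by_cases h : (i : ℕ) < k
        · rw [dif_pos h, dif_pos h, dif_pos h]
        · rw [dif_neg h, dif_neg h, dif_neg h, zero_smul]
    · rintro x ⟨⟨lam, pts⟩, ⟨hlam, hpts⟩, rfl⟩
      exact mem_convexHull_of_exists_fintype lam pts hlam.1 hlam.2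
        (fun i => hpts i trivial) rfl
  rw [himage]
  exact hTcomp.image hcont

lemma Wset_cap_le (K : Set (EuclideanSpace ℝ (Fin d))) (hKfin : volume K ≠ ⊤) {s : ℝ}
    (hs : 0 ≤ s) {z0 w : EuclideanSpace ℝ (Fin d)} (hw : w ∈ Wset K s z0) :
    volume (K ∩ {x | ⟪w, z0⟫ ≤ ⟪w, x⟫}) ≤ ENNReal.ofReal s :=
  (ENNReal.le_ofReal_iff_toReal_le
    (ne_top_of_le_ne_top hKfin (measure_mono Set.inter_subset_left)) hs).2 hw.2

lemma cover_bound (K : Set (EuclideanSpace ℝ (Fin d))) (hKfin : volume K ≠ ⊤) {s : ℝ}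
    (hs : 0 ≤ s) (z0 : EuclideanSpace ℝ (Fin d)) {k : ℕ}
    (wg : Fin k → EuclideanSpace ℝ (Fin d)) (mu : Fin k → ℝ)
    (hmem : ∀ i, wg i ∈ Wset K s z0) (hnn : ∀ i, 0 ≤ mu i)
    {v : EuclideanSpace ℝ (Fin d)} (hv : v = ∑ i, mu i • wg i) (hv0 : v ≠ 0) :
    (volume (K ∩ {x | ⟪v, z0⟫ ≤ ⟪v, x⟫})).toReal ≤ k * s := by
  have hcov : K ∩ {x | ⟪v, z0⟫ < ⟪v, x⟫} ⊆ ⋃ i, K ∩ {x | ⟪wg i, z0⟫ ≤ ⟪wg i, x⟫} := by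
    rintro x ⟨hxK, hx⟩
    by_contra hcon
    simp only [Set.mem_iUnion, Set.mem_inter_iff, Set.mem_setOf_eq, not_exists, not_and,
      not_le] at hcon
    have h1 : ⟪v, x - z0⟫ ≤ 0 := by
      rw [hv, sum_inner]
      apply Finset.sum_nonpos
      intro i _
      rw [real_inner_smul_left]
      have h2 : ⟪wg i, x - z0⟫ < 0 := by
        rw [inner_sub_right]
        have := hcon i hxK
        linarith
      exact mul_nonpos_of_nonneg_of_nonpos (hnn i) (le_of_lt h2)
    rw [inner_sub_right] at h1
    have hx' : ⟪v, z0⟫ < ⟪v, x⟫ := hx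
    linarith
  have hsplit : K ∩ {x | ⟪v, z0⟫ ≤ ⟪v, x⟫} ⊆
      (K ∩ {x | ⟪v, z0⟫ < ⟪v, x⟫}) ∪ {x | ⟪v, x⟫ = ⟪v, z0⟫} := by
    rintro x ⟨hxK, hx⟩
    have hx' : ⟪v, z0⟫ ≤ ⟪v, x⟫ := hx
    rcases lt_or_eq_of_le hx' with h | h
    · exact Or.inl ⟨hxK, h⟩
    · exact Or.inr h.symm
  have h1 : volume (K ∩ {x | ⟪v, z0⟫ ≤ ⟪v, x⟫}) ≤ ENNReal.ofReal (k * s) := by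
    calc volume (K ∩ {x | ⟪v, z0⟫ ≤ ⟪v, x⟫})
        ≤ volume ((K ∩ {x | ⟪v, z0⟫ < ⟪v, x⟫}) ∪ {x | ⟪v, x⟫ = ⟪v, z0⟫}) :=
          measure_mono hsplit
      _ ≤ volume (K ∩ {x | ⟪v, z0⟫ < ⟪v, x⟫}) + volume {x | ⟪v, x⟫ = ⟪v, z0⟫} :=
          measure_union_le _ _
      _ = volume (K ∩ {x | ⟪v, z0⟫ < ⟪v, x⟫}) := by
          rw [null_hyperplane v hv0, add_zero]
      _ ≤ volume (⋃ i, K ∩ {x | ⟪wg i, z0⟫ ≤ ⟪wg i, x⟫}) := measure_mono hcov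
      _ ≤ ∑ i : Fin k, volume (K ∩ {x | ⟪wg i, z0⟫ ≤ ⟪wg i, x⟫}) := measure_iUnion_fintype_le _ _
      _ ≤ ∑ _i : Fin k, ENNReal.ofReal s := Finset.sum_le_sum fun i _ =>
          Wset_cap_le K hKfin hs (hmem i)
      _ = k * ENNReal.ofReal s := by
          rw [Finset.sum_const, Finset.card_univ, Fintype.card_fin, nsmul_eq_mul]
      _ = ENNReal.ofReal (k * s) := by
          rw [ENNReal.ofReal_mul (by positivity : (0:ℝ) ≤ (k:ℝ))]
          congr 1
          exact (ENNReal.ofReal_natCast k).symm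
  exact ENNReal.toReal_le_of_le_ofReal (by positivity) h1

lemma case1_bound (K : Set (EuclideanSpace ℝ (Fin d))) (hKmeas : MeasurableSet K)
    (hKfin : volume K ≠ ⊤) {s : ℝ} (hs : 0 ≤ s) (z0 : EuclideanSpace ℝ (Fin d))
    (h0 : (0 : EuclideanSpace ℝ (Fin d)) ∈ convexHull ℝ (Wset K s z0)) :
    (volume K).toReal ≤ (d + 1) * s := by
  obtain ⟨ι, hι, wt, zt, hwnn, hwsum, hzmem, hzsum⟩ := mem_convexHull_iff_exists_fintype.1 h0
  -- reindex to Fin n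
  set n := Fintype.card ι with hn
  set e := (Fintype.equivFin ι).symm with he
  set lam : Fin n → ℝ := fun j => wt (e j) with hlam
  set wf : Fin n → EuclideanSpace ℝ (Fin d) := fun j => zt (e j) with hwf
  have hlamnn : ∀ j, 0 ≤ lam j := fun j => hwnn _
  have hwfmem : ∀ j, wf j ∈ Wset K s z0 := fun j => hzmem _
  have hlamsum : ∑ j, lam j = 1 := by
    rw [hlam, ← hwsum]
    exact Fintype.sum_equiv e _ _ fun j => rfl
  have hsum0 : ∑ j, lam j • wf j = 0 := by
    rw [hlam, hwf, ← hzsum]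
    exact Fintype.sum_equiv e _ _ fun j => rfl
  -- find a positive weight
  have hex : ∃ j, 0 < lam j := by
    by_contra hcon
    push_neg at hcon
    have : (1:ℝ) ≤ 0 := hlamsum ▸ Finset.sum_nonpos (fun j _ => hcon j)
    linarith
  obtain ⟨j0, hj0⟩ := hex
  have hn0 : n ≠ 0 := fun h => (j0.cast h).elim0
  obtain ⟨m, hm⟩ := Nat.exists_eq_succ_of_ne_zero hn0
  set lam' : Fin (m + 1) → ℝ := fun j => lam (j.cast hm.symm) with hlam'
  set wf' : Fin (m + 1) → EuclideanSpace ℝ (Fin d) := fun j => wf (j.cast hm.symm) with hwf'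
  set j0' : Fin (m + 1) := j0.cast hm with hj0'
  have hlam'nn : ∀ j, 0 ≤ lam' j := fun j => hlamnn _
  have hwf'mem : ∀ j, wf' j ∈ Wset K s z0 := fun j => hwfmem _
  have hj0pos : 0 < lam' j0' := by
    rw [hlam', hj0']
    simpa using hj0
  have hsum0' : ∑ j, lam' j • wf' j = 0 := by
    rw [← hsum0]
    exact Fintype.sum_equiv (finCongr hm.symm) _ _ fun j => rfl
  have hvv : ∑ j : Fin m, lam' (j0'.succAbove j) • wf' (j0'.succAbove j) =
      - (lam' j0' • wf' j0') := by
    have h1 := Fin.sum_univ_succAbove (fun i => lam' i • wf' i) j0'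
    rw [hsum0'] at h1
    linear_combination (norm := module) -h1
  obtain ⟨k, wg, mu, hk, hwgmem, hmunn, hmusum⟩ := conic_caratheodory (Wset K s z0) m
    (fun j => wf' (j0'.succAbove j)) (fun j => lam' (j0'.succAbove j))
    (fun j => hwf'mem _) (fun j => hlam'nn _)
  set F : Fin (k + 1) → EuclideanSpace ℝ (Fin d) := Fin.cons (wf' j0') wg with hF
  set L : Fin (k + 1) → ℝ := Fin.cons (lam' j0') mu with hL
  have hFmem : ∀ i, F i ∈ Wset K s z0 := by
    intro i
    induction i using Fin.cases with
    | zero => simpa [hF] using hwf'mem j0'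
    | succ j => simpa [hF] using hwgmem j
  have hLnn : ∀ i, 0 ≤ L i := by
    intro i
    induction i using Fin.cases with
    | zero => simpa [hL] using le_of_lt hj0pos
    | succ j => simpa [hL] using hmunn j
  have hLF : ∑ i, L i • F i = 0 := by
    have h1 : ∀ i, L i • F i =
        (Fin.cons (lam' j0' • wf' j0') (fun j => mu j • wg j) :
          Fin (k + 1) → EuclideanSpace ℝ (Fin d)) i := by
      intro i
      induction i using Fin.cases with
      | zero => simp [hL, hF]
      | succ j => simp [hL, hF]
    rw [Finset.sum_congr rfl fun i _ => h1 i, Fin.sum_cons, hmusum, hvv]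
    abel
  have hcover : K ⊆ ⋃ i : Fin (k + 1), K ∩ {x | ⟪F i, z0⟫ ≤ ⟪F i, x⟫} := by
    intro x hxK
    by_contra hcon
    simp only [Set.mem_iUnion, Set.mem_inter_iff, Set.mem_setOf_eq, not_exists, not_and,
      not_le] at hcon
    have h1 : ∑ i, (L i * ⟪F i, x - z0⟫) < ∑ i : Fin (k + 1), (0:ℝ) := by
      apply Finset.sum_lt_sum
      · intro i _
        have h2 : ⟪F i, x - z0⟫ < 0 := by
          rw [inner_sub_right]
          have := hcon i hxK
          linarith
        exact mul_nonpos_of_nonneg_of_nonpos (hLnn i) (le_of_lt h2)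
      · refine ⟨0, Finset.mem_univ 0, ?_⟩
        have h2 : ⟪F 0, x - z0⟫ < 0 := by
          rw [inner_sub_right]
          have := hcon 0 hxK
          linarith
        have hL0 : 0 < L 0 := by simpa [hL] using hj0pos
        exact mul_neg_of_pos_of_neg hL0 h2
    have h2 : ∑ i, (L i * ⟪F i, x - z0⟫) = 0 := by
      have h3 : ⟪∑ i, L i • F i, x - z0⟫ = ∑ i, (L i * ⟪F i, x - z0⟫) := by
        rw [sum_inner]
        exact Finset.sum_congr rfl fun i _ => real_inner_smul_left _ _ _
      rw [← h3, hLF, inner_zero_left]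
    rw [h2] at h1
    simp at h1
  have hfinal : volume K ≤ ENNReal.ofReal ((d + 1) * s) := by
    calc volume K ≤ volume (⋃ i : Fin (k + 1), K ∩ {x | ⟪F i, z0⟫ ≤ ⟪F i, x⟫}) :=
          measure_mono hcover
      _ ≤ ∑ i : Fin (k + 1), volume (K ∩ {x | ⟪F i, z0⟫ ≤ ⟪F i, x⟫}) :=
          measure_iUnion_fintype_le _ _
      _ ≤ ∑ _i : Fin (k + 1), ENNReal.ofReal s := Finset.sum_le_sum fun i _ =>
          Wset_cap_le K hKfin hs (hFmem i)
      _ = (k + 1) * ENNReal.ofReal s := by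
          rw [Finset.sum_const, Finset.card_univ, Fintype.card_fin, nsmul_eq_mul]
          norm_num
      _ ≤ (d + 1) * ENNReal.ofReal s := by
          apply mul_le_mul_left
          norm_cast
          omega
      _ = ENNReal.ofReal ((d + 1) * s) := by
          rw [ENNReal.ofReal_mul (by positivity : (0:ℝ) ≤ (d:ℝ) + 1),
            ENNReal.ofReal_add (by positivity) zero_le_one, ENNReal.ofReal_natCast,
            ENNReal.ofReal_one]
  exact ENNReal.toReal_le_of_le_ofReal (by positivity) hfinal

end Stmt6Aux

open Stmt6Aux Filter

set_option maxHeartbeats 1000000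

/-- If the bounding hyperplane of a cap `C = K ∩ {x : ⟪u,x⟫ ≥ c}` of a convex
body `K` of volume `1` is tangent to the floating body `K(v ≥ s)`, then `s ≤ V(C) ≤ d s`. -/
theorem stmt6 {d : ℕ} (K : Set (EuclideanSpace ℝ (Fin d)))
    (hKconv : Convex ℝ K) (hKcomp : IsCompact K) (hKint : (interior K).Nonempty)
    (hKvol : volume K = 1)
    (s : ℝ) (hs : 0 < s)
    (u : EuclideanSpace ℝ (Fin d)) (hu : ‖u‖ = 1) (c : ℝ)
    (htangent : IsGreatest ((fun x => ⟪u, x⟫) '' {z ∈ K | s ≤ vfun K z}) c) :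
    s ≤ (volume (K ∩ {x | c ≤ ⟪u, x⟫})).toReal ∧
    (volume (K ∩ {x | c ≤ ⟪u, x⟫})).toReal ≤ d * s := by
  obtain ⟨⟨z0, hz0mem, hz0c0⟩, hub⟩ := htangent
  obtain ⟨hz0K, hz0v⟩ := hz0mem
  have hz0c : ⟪u, z0⟫ = c := hz0c0
  have hu0 : u ≠ 0 := fun h => by rw [h, norm_zero] at hu; norm_num at hu
  have hKfin : volume K ≠ ⊤ := by rw [hKvol]; exact ENNReal.one_ne_top
  have hKmeas : MeasurableSet K := hKcomp.measurableSet
  constructor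
  · calc s ≤ vfun K z0 := hz0v
      _ ≤ (volume (K ∩ {x | c ≤ ⟪u, x⟫})).toReal :=
          vfun_le K z0 u hu0 c (le_of_eq hz0c.symm)
  · have htang : ∀ x ∈ K, c < ⟪u, x⟫ → vfun K x < s := by
      intro x hx hcx
      by_contra hcon
      push_neg at hcon
      exact absurd (hub ⟨x, ⟨hx, hcon⟩, rfl⟩) (not_le.2 hcx)
    -- the opposite cap has volume at least s
    have hoppEq : {x : EuclideanSpace ℝ (Fin d) | ⟪u, x⟫ ≤ c} = {x | -c ≤ ⟪-u, x⟫} := by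
      ext x
      simp only [Set.mem_setOf_eq, inner_neg_left, neg_le_neg_iff]
    have hoppB : s ≤ (volume (K ∩ {x | ⟪u, x⟫ ≤ c})).toReal := by
      rw [hoppEq]
      refine le_trans hz0v (vfun_le K z0 (-u) (neg_ne_zero.2 hu0) (-c) ?_)
      rw [inner_neg_left, hz0c]
    by_cases h0 : (0 : EuclideanSpace ℝ (Fin d)) ∈ convexHull ℝ (Wset K s z0)
    · -- Case 1 : the full body is covered by d+1 small caps
      have h1 := case1_bound K hKmeas hKfin hs.le z0 h0
      rw [hKvol, ENNReal.toReal_one] at h1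
      have hmeasB : MeasurableSet (K ∩ {x | ⟪u, x⟫ ≤ c}) :=
        hKmeas.inter ((isClosed_le (continuous_const.inner continuous_id) continuous_const).measurableSet)
      have hadd := measure_union_add_inter (μ := volume) (K ∩ {x | c ≤ ⟪u, x⟫}) hmeasB
      have hunion : (K ∩ {x | c ≤ ⟪u, x⟫}) ∪ (K ∩ {x | ⟪u, x⟫ ≤ c}) = K := by
        ext x
        constructor
        · rintro (⟨h, _⟩ | ⟨h, _⟩) <;> exact h
        · intro hx
          rcases le_total c ⟪u, x⟫ with h | h
          · exact Or.inl ⟨hx, h⟩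
          · exact Or.inr ⟨hx, h⟩
      have hinter0 : volume ((K ∩ {x | c ≤ ⟪u, x⟫}) ∩ (K ∩ {x | ⟪u, x⟫ ≤ c})) = 0 := by
        refine measure_mono_null ?_ (null_hyperplane u hu0 c)
        rintro x ⟨⟨_, h1x⟩, ⟨_, h2x⟩⟩
        exact le_antisymm h2x h1x
      rw [hunion, hinter0, add_zero, hKvol] at hadd
      have hAfin : volume (K ∩ {x | c ≤ ⟪u, x⟫}) ≠ ⊤ :=
        ne_top_of_le_ne_top hKfin (measure_mono Set.inter_subset_left)
      have hBfin : volume (K ∩ {x | ⟪u, x⟫ ≤ c}) ≠ ⊤ :=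
        ne_top_of_le_ne_top hKfin (measure_mono Set.inter_subset_left)
      have hsum1 : (volume (K ∩ {x | c ≤ ⟪u, x⟫})).toReal
          + (volume (K ∩ {x | ⟪u, x⟫ ≤ c})).toReal = 1 := by
        rw [← ENNReal.toReal_add hAfin hBfin, ← hadd, ENNReal.toReal_one]
      linarith
    · -- Case 2 : u lies in the closed conic hull of W
      have hUc : u ∈ closure (Sset K s z0) := by
        by_contra hnc
        obtain ⟨f, α, hfa, hαu⟩ := geometric_hahn_banach_closed_point
          (Sset_convex K s z0).closure isClosed_closure hnc
        have hα0 : (0:ℝ) < α := by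
          have := hfa 0 (subset_closure (Sset_zero K s z0)); simpa using this
        have hfW : ∀ w ∈ Wset K s z0, f w ≤ 0 := by
          intro w hw
          by_contra hpos
          push_neg at hpos
          have hr : ∀ r : ℝ, 0 ≤ r → r * f w < α := by
            intro r hr0
            have hm : r • w ∈ Sset K s z0 :=
              Sset_smul K s z0 hr0 (Wset_sub_Sset K s z0 hw)
            have := hfa _ (subset_closure hm)
            rwa [_root_.map_smul, smul_eq_mul] at this
          have h2 := hr ((α + 1) / f w) (by positivity)
          rw [div_mul_cancel₀ _ (ne_of_gt hpos)] at h2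
          linarith
        set y := (InnerProductSpace.toDual ℝ (EuclideanSpace ℝ (Fin d))).symm f with hy
        have hyx : ∀ x, ⟪y, x⟫ = f x := fun x => InnerProductSpace.toDual_symm_apply
        have hyW : ∀ w ∈ Wset K s z0, ⟪w, y⟫ ≤ 0 := fun w hw => by
          rw [real_inner_comm, hyx]; exact hfW w hw
        have hyu : 0 < ⟪u, y⟫ := by rw [real_inner_comm, hyx]; linarith
        obtain ⟨y0, δ, hδ0, hy0W⟩ : ∃ (y0 : EuclideanSpace ℝ (Fin d)) (δ : ℝ), 0 < δ ∧
            ∀ w ∈ Wset K s z0, ⟪w, y0⟫ ≤ -δ := by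
          have hWcomp := Wset_compact K hKfin hs.le z0
          have hconvW : IsCompact (convexHull ℝ (Wset K s z0)) := isCompact_convexHull hWcomp
          obtain ⟨f2, α2, hf2a, hα2⟩ := geometric_hahn_banach_closed_point
            (convex_convexHull ℝ _) hconvW.isClosed h0
          have hα2' : α2 < 0 := by simpa using hα2
          refine ⟨(InnerProductSpace.toDual ℝ (EuclideanSpace ℝ (Fin d))).symm f2, -α2,
            by linarith, ?_⟩
          intro w hw
          have := hf2a w (subset_convexHull ℝ _ hw)
          rw [real_inner_comm, InnerProductSpace.toDual_symm_apply]
          linarith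
        set t := ⟪u, y⟫ / (2 * |⟪u, y0⟫| + 1) with ht
        have ht0 : 0 < t := div_pos hyu (by positivity)
        set yt := y + t • y0 with hyt
        have hytu : 0 < ⟪u, yt⟫ := by
          rw [hyt, inner_add_right, real_inner_smul_right]
          have h3 : -|⟪u, y0⟫| ≤ ⟪u, y0⟫ := neg_abs_le _
          have h4 : 0 ≤ |⟪u, y0⟫| := abs_nonneg _
          have h5 : t * (2 * |⟪u, y0⟫| + 1) = ⟪u, y⟫ := by
            rw [ht, div_mul_cancel₀]
            positivity
          nlinarith
        have hytW : ∀ w ∈ Wset K s z0, ⟪w, yt⟫ ≤ -(t * δ) := by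
          intro w hw
          rw [hyt, inner_add_right, real_inner_smul_right]
          have h4 := hyW w hw
          have h5 := hy0W w hw
          nlinarith
        have hytTC : yt ∈ closure (TCset K z0) :=
          mem_closure_TC K hKconv hz0K hs.le yt
            (fun w hw => le_trans (hytW w hw) (by nlinarith))
        obtain ⟨q, hq⟩ := hKint
        obtain ⟨ρ, hρ0, hball⟩ := Metric.isOpen_iff.1 isOpen_interior q hq
        have hballK : Metric.ball q ρ ⊆ K := le_trans hball interior_subset
        set M := ‖q - z0‖ with hM
        set Mu := |⟪u, q - z0⟫| with hMu
        set ε := min (t * δ / (2 * (M + 1))) (⟪u, yt⟫ / (2 * (Mu + 1))) with hε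
        have hM0 : 0 ≤ M := norm_nonneg _
        have hMu0 : 0 ≤ Mu := abs_nonneg _
        have hε0 : 0 < ε := lt_min (by positivity) (by positivity)
        set η := yt + ε • (q - z0) with hη
        have hηu : 0 < ⟪u, η⟫ := by
          rw [hη, inner_add_right, real_inner_smul_right]
          have h6 : ε ≤ ⟪u, yt⟫ / (2 * (Mu + 1)) := min_le_right _ _
          have h7 : -Mu ≤ ⟪u, q - z0⟫ := neg_abs_le _
          have h8 : ε * (2 * (Mu + 1)) ≤ ⟪u, yt⟫ := by
            rw [← le_div_iff₀ (by positivity)]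
            exact h6
          nlinarith
        obtain ⟨τ, hτ0, hmem⟩ := approach K hKconv hz0K hρ0 hballK hytTC hε0
        obtain ⟨w, hwW, hwη⟩ := exists_W_dir K hKfin hs hu hz0v hz0c htang hηu hτ0 hmem
        have h9 := hytW w hwW
        have h10 : ⟪w, q - z0⟫ ≤ M := by
          have := real_inner_le_norm w (q - z0)
          rwa [hwW.1, one_mul] at this
        have h11 : ε ≤ t * δ / (2 * (M + 1)) := min_le_left _ _
        have h11' : ε * (2 * (M + 1)) ≤ t * δ := by
          rw [← le_div_iff₀ (by positivity)]
          exact h11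
        have h12 : ⟪w, η⟫ < 0 := by
          rw [hη, inner_add_right, real_inner_smul_right]
          nlinarith
        linarith
      obtain ⟨vs, hvsS, hvsu⟩ := mem_closure_iff_seq_limit.1 hUc
      have hvnorm : Tendsto (fun n => ‖vs n‖) Filter.atTop (nhds 1) := by
        exact hu ▸ hvsu.norm
      have hev : ∀ᶠ n in Filter.atTop, 0 < ‖vs n‖ :=
        hvnorm.eventually (eventually_gt_nhds (by norm_num : (0:ℝ) < 1))
      obtain ⟨N, hN⟩ := Filter.eventually_atTop.1 hev
      have hbound : ∀ n : ℕ,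
          (volume (K ∩ {x | ⟪vs (n + N), z0⟫ ≤ ⟪vs (n + N), x⟫})).toReal ≤ d * s := by
        intro n
        obtain ⟨m, wf, lam, hmem', hnn', hveq⟩ := hvsS (n + N)
        obtain ⟨k, wg, mu, hk, hg1, hg2, hg3⟩ :=
          conic_caratheodory (Wset K s z0) m wf lam hmem' hnn'
        have hvne : vs (n + N) ≠ 0 := by
          have := hN (n + N) (Nat.le_add_left N n)
          exact norm_pos_iff.1 this
        have h4 := cover_bound K hKfin hs.le z0 wg mu hg1 hg2
          (v := vs (n + N)) (hveq.trans hg3.symm) hvne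
        calc (volume (K ∩ {x | ⟪vs (n + N), z0⟫ ≤ ⟪vs (n + N), x⟫})).toReal
            ≤ k * s := h4
          _ ≤ d * s := by
              apply mul_le_mul_of_nonneg_right _ hs.le
              exact_mod_cast hk
      have hcs : Tendsto (fun n => ⟪vs (n + N), z0⟫) Filter.atTop (nhds c) := by
        rw [← hz0c]
        exact ((tendsto_add_atTop_iff_nat N).2 hvsu).inner tendsto_const_nhds
      have hws : Tendsto (fun n => vs (n + N)) Filter.atTop (nhds u) :=
        (tendsto_add_atTop_iff_nat N).2 hvsu
      exact limit_caps K hKfin hu0 (fun n => vs (n + N)) (fun n => ⟪vs (n + N), z0⟫)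
        hws hcs (by positivity) hbound
end

section
/- Let $N$ be a Poisson random variable with parameter $p > 0$. Then $\mathbb{P}(N \geq 3p) \leq \frac{3}{3-e} e^{-p}$. -/
open MeasureTheory
open scoped ProbabilityTheory

/-- If `N` is Poisson with parameter `p > 0`, then
`ℙ(N ≥ 3p) ≤ (3/(3-e)) e^{-p}`. -/
theorem stmt8 {Ω : Type*} [MeasureSpace Ω] [IsProbabilityMeasure (ℙ : Measure Ω)]
    (N : Ω → ℕ) (p : ℝ) (hp : 0 < p)
    (hN : ∀ k : ℕ, ℙ {ω | N ω = k} =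
      ENNReal.ofReal (Real.exp (-p) * p ^ k / (Nat.factorial k))) :
    ℙ {ω | 3 * p ≤ (N ω : ℝ)} ≤
      ENNReal.ofReal (3 / (3 - Real.exp 1) * Real.exp (-p)) := by
  have he3 : Real.exp 1 < 3 := by
    have := Real.exp_one_lt_d9; linarith
  have he0 : (0:ℝ) < Real.exp 1 := Real.exp_pos 1
  set r : ℝ := Real.exp 1 / 3 with hr
  have hr0 : 0 ≤ r := by positivity
  have hr1 : r < 1 := by rw [hr, div_lt_one]; exact he3; norm_num
  set f : ℕ → Set Ω := fun k => if 3 * p ≤ (k:ℝ) then {ω | N ω = k} else ∅ with hf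
  have hsub : {ω | 3 * p ≤ (N ω : ℝ)} ⊆ ⋃ k, f k := by
    intro ω hω
    refine Set.mem_iUnion.2 ⟨N ω, ?_⟩
    simp only [hf]
    have h' : 3 * p ≤ (N ω : ℝ) := hω
    rw [if_pos h']
    exact rfl
  have hbound : ∀ k, ℙ (f k) ≤ ENNReal.ofReal (Real.exp (-p) * r ^ k) := by
    intro k
    simp only [hf]
    split_ifs with h
    · rw [hN k]
      apply ENNReal.ofReal_le_ofReal
      rw [mul_div_assoc]
      apply mul_le_mul_of_nonneg_left _ (Real.exp_nonneg _)
      -- p^k / k! ≤ (e/3)^k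
      have hkfac : ((k:ℝ))^k / (Nat.factorial k) ≤ Real.exp 1 ^ k := by
        have := Real.pow_div_factorial_le_exp (x := (k:ℝ)) (Nat.cast_nonneg k) k
        calc ((k:ℝ))^k / (Nat.factorial k) ≤ Real.exp k := this
          _ = Real.exp 1 ^ k := by rw [← Real.exp_nat_mul]; ring_nf
      have hpk : p ^ k ≤ ((k:ℝ)/3) ^ k := by
        apply pow_le_pow_left₀ hp.le
        linarith
      have hfacpos : (0:ℝ) < Nat.factorial k := by positivity
      calc p ^ k / (Nat.factorial k) ≤ ((k:ℝ)/3)^k / (Nat.factorial k) := by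
            gcongr
        _ = ((k:ℝ))^k / (Nat.factorial k) / 3^k := by rw [div_pow]; ring
        _ ≤ Real.exp 1 ^ k / 3^k := by gcongr
        _ = r ^ k := by rw [hr, div_pow]
    · simp
  have hsummable : Summable (fun k : ℕ => Real.exp (-p) * r ^ k) :=
    (summable_geometric_of_lt_one hr0 hr1).mul_left _
  have htsum : ∑' k : ℕ, ENNReal.ofReal (Real.exp (-p) * r ^ k)
      = ENNReal.ofReal (3 / (3 - Real.exp 1) * Real.exp (-p)) := by
    rw [← ENNReal.ofReal_tsum_of_nonneg (fun k => by positivity) hsummable]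
    congr 1
    rw [tsum_mul_left, tsum_geometric_of_lt_one hr0 hr1]
    rw [hr]
    have : (1 - Real.exp 1 / 3)⁻¹ = 3 / (3 - Real.exp 1) := by
      field_simp
    rw [this]; ring
  calc ℙ {ω | 3 * p ≤ (N ω : ℝ)} ≤ ℙ (⋃ k, f k) := measure_mono hsub
    _ ≤ ∑' k, ℙ (f k) := measure_iUnion_le f
    _ ≤ ∑' k : ℕ, ENNReal.ofReal (Real.exp (-p) * r ^ k) := ENNReal.tsum_le_tsum hbound
    _ = ENNReal.ofReal (3 / (3 - Real.exp 1) * Real.exp (-p)) := htsum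
end

section
/- Let $(\xi_\eta)$ and $(\xi'_\eta)$ be two families of real random variables indexed by $\eta$, with means $\mu_\eta, \mu'_\eta$ and variances $\sigma_\eta^2, \sigma'^2_\eta$. Suppose there are functions $\varepsilon_1(\eta), \varepsilon_2(\eta), \varepsilon_3(\eta), \varepsilon_4(\eta)$, all tending to $0$ as $\eta \to \infty$, such that: (i) $|\mu'_\eta - \mu_\eta| \leq \varepsilon_1(\eta)\,\sigma_\eta$; (ii) $|\sigma'^2_\eta - \sigma_\eta^2| \leq \varepsilon_2(\eta)\,\sigma_\eta^2$; (iii) $\sup_x |\mathbb{P}(\xi'_\eta \leq x) - \mathbb{P}(\xi_\eta \leq x)| \leq \varepsilon_3(\eta)$; (iv) $\sup_x |\mathbb{P}((\xi'_\eta - \mu'_\eta)/\sigma'_\eta \leq x) - \Phi(x)| \leq \varepsilon_4(\eta)$. Then there is a constant $c > 0$ such that for every $x$ and every $\eta$, $$\Bigl|\mathbb{P}\Bigl(\frac{\xi_\eta - \mu_\eta}{\sigma_\eta} \leq x\Bigr) - \Phi(x)\Bigr| \leq c \sum_{i=1}^4 \varepsilon_i(\eta).$$ -/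
open MeasureTheory Filter
open scoped ProbabilityTheory

/-- The standard normal cumulative distribution function. -/
noncomputable def stdNormalCDF (x : ℝ) : ℝ :=
  ((ProbabilityTheory.gaussianReal 0 1) (Set.Iic x)).toReal

open ProbabilityTheory Real



lemma stdNormalCDF_mono : Monotone stdNormalCDF := fun u v h =>
  ENNReal.toReal_mono (measure_ne_top _ _) (measure_mono (Set.Iic_subset_Iic.2 h))

lemma stdNormalCDF_nonneg (x : ℝ) : 0 ≤ stdNormalCDF x := ENNReal.toReal_nonneg

lemma prob_toReal_le_one {α : Type*} [MeasurableSpace α] (m : Measure α)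
    [IsProbabilityMeasure m] (s : Set α) : (m s).toReal ≤ 1 := by
  rw [← ENNReal.toReal_one]
  exact ENNReal.toReal_mono ENNReal.one_ne_top prob_le_one

lemma stdNormalCDF_le_one (x : ℝ) : stdNormalCDF x ≤ 1 := prob_toReal_le_one _ _

lemma stdNormalCDF_sub_le {u v B : ℝ} (huv : u ≤ v)
    (hB : ∀ t ∈ Set.Ioc u v, gaussianPDFReal 0 1 t ≤ B) :
    stdNormalCDF v - stdNormalCDF u ≤ (v - u) * B := by
  have hmeas : (gaussianReal 0 1) (Set.Iic v)
      = (gaussianReal 0 1) (Set.Iic u) + (gaussianReal 0 1) (Set.Ioc u v) := by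
    rw [← measure_union (Set.Iic_disjoint_Ioc le_rfl) measurableSet_Ioc,
      Set.Iic_union_Ioc_eq_Iic huv]
  have hdiff : stdNormalCDF v - stdNormalCDF u = ((gaussianReal 0 1) (Set.Ioc u v)).toReal := by
    unfold stdNormalCDF
    rw [hmeas, ENNReal.toReal_add (measure_ne_top _ _) (measure_ne_top _ _)]
    ring
  rw [hdiff, gaussianReal_apply_eq_integral 0 one_ne_zero,
    ENNReal.toReal_ofReal
      (setIntegral_nonneg measurableSet_Ioc fun t _ => gaussianPDFReal_nonneg 0 1 t)]
  calc ∫ t in Set.Ioc u v, gaussianPDFReal 0 1 t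
      ≤ ∫ _ in Set.Ioc u v, B :=
        setIntegral_mono_on (integrable_gaussianPDFReal 0 1).integrableOn
          (integrableOn_const (by rw [Real.volume_Ioc]; exact ENNReal.ofReal_ne_top) (by simp))
          measurableSet_Ioc hB
    _ = (v - u) * B := by
        rw [setIntegral_const, measureReal_def, Real.volume_Ioc, ENNReal.toReal_ofReal (sub_nonneg.2 huv),
          smul_eq_mul]

lemma pdf_eq (t : ℝ) : gaussianPDFReal 0 1 t = (√(2 * π))⁻¹ * rexp (- t ^ 2 / 2) := by
  simp [gaussianPDFReal]

lemma two_le_sqrt_two_pi : (2 : ℝ) ≤ √(2 * π) := by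
  have h1 : (0:ℝ) ≤ 2 * π := by nlinarith [Real.pi_gt_three]
  nlinarith [Real.sq_sqrt h1, Real.sqrt_nonneg (2 * π), Real.pi_gt_three,
    sq_nonneg (√(2 * π) - 2)]

lemma pdf_le_half (t : ℝ) : gaussianPDFReal 0 1 t ≤ 1 / 2 := by
  rw [pdf_eq]
  have h1 : rexp (- t ^ 2 / 2) ≤ 1 := Real.exp_le_one_iff.2 (by nlinarith [sq_nonneg t])
  have h2 := two_le_sqrt_two_pi
  have h4 : (√(2 * π))⁻¹ ≤ 1/2 := by
    rw [inv_le_comm₀ (by linarith) (by norm_num)]; linarith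
  nlinarith [Real.exp_pos (- t ^ 2 / 2)]

lemma cdf_lipschitz (a b : ℝ) : |stdNormalCDF b - stdNormalCDF a| ≤ |b - a| := by
  rcases le_total a b with h | h
  · rw [abs_of_nonneg (sub_nonneg.2 (stdNormalCDF_mono h)), abs_of_nonneg (sub_nonneg.2 h)]
    calc stdNormalCDF b - stdNormalCDF a ≤ (b - a) * (1/2) :=
          stdNormalCDF_sub_le h fun t _ => pdf_le_half t
      _ ≤ b - a := by nlinarith
  · rw [abs_sub_comm, abs_sub_comm b a,
      abs_of_nonneg (sub_nonneg.2 (stdNormalCDF_mono h)), abs_of_nonneg (sub_nonneg.2 h)]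
    calc stdNormalCDF a - stdNormalCDF b ≤ (a - b) * (1/2) :=
          stdNormalCDF_sub_le h fun t _ => pdf_le_half t
      _ ≤ a - b := by nlinarith

lemma cdf_scale {l : ℝ} (x : ℝ) (hl : 1/2 ≤ l) :
    |stdNormalCDF (l * x) - stdNormalCDF x| ≤ |l - 1| := by
  set u := min x (l * x) with hu
  set v := max x (l * x) with hv
  have huv : u ≤ v := min_le_max
  have hB : ∀ t ∈ Set.Ioc u v, gaussianPDFReal 0 1 t ≤ (√(2 * π))⁻¹ * rexp (- x ^ 2 / 8) := by
    intro t ht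
    have ht2 : x ^ 2 / 4 ≤ t ^ 2 := by
      rcases le_or_gt 0 x with hx | hx
      · have h1 : x / 2 ≤ u := le_min (by linarith) (by nlinarith)
        have : x / 2 < t := lt_of_le_of_lt h1 ht.1
        nlinarith
      · have h1 : v ≤ x / 2 := max_le (by linarith) (by nlinarith)
        have : t ≤ x / 2 := le_trans ht.2 h1
        nlinarith
    rw [pdf_eq]
    have : rexp (- t ^ 2 / 2) ≤ rexp (- x ^ 2 / 8) := Real.exp_le_exp.2 (by linarith)
    have hpos : (0:ℝ) < (√(2 * π))⁻¹ := by
      have := two_le_sqrt_two_pi; positivity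
    nlinarith
  have hsub : stdNormalCDF v - stdNormalCDF u ≤ (v - u) * ((√(2 * π))⁻¹ * rexp (- x ^ 2 / 8)) :=
    stdNormalCDF_sub_le huv hB
  have habs : |stdNormalCDF (l * x) - stdNormalCDF x| = stdNormalCDF v - stdNormalCDF u := by
    rcases le_total x (l * x) with h | h
    · rw [hu, hv, min_eq_left h, max_eq_right h,
        abs_of_nonneg (sub_nonneg.2 (stdNormalCDF_mono h))]
    · rw [hu, hv, min_eq_right h, max_eq_left h, abs_sub_comm,
        abs_of_nonneg (sub_nonneg.2 (stdNormalCDF_mono h))]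
  have hlen : v - u = |l - 1| * |x| := by
    rw [hv, hu, max_sub_min_eq_abs, ← abs_mul]; ring_nf
  have hpos : (0:ℝ) < √(2 * π) := by have := two_le_sqrt_two_pi; linarith
  have hxe : |x| * rexp (- x ^ 2 / 8) ≤ √(2 * π) := by
    have h2 : Real.sqrt 2 ^ 2 = 2 := Real.sq_sqrt (by norm_num)
    have hexp : 1 + x ^ 2 / 8 ≤ rexp (x ^ 2 / 8) := by
      have := Real.add_one_le_exp (x ^ 2 / 8); linarith
    have key : |x| ≤ Real.sqrt 2 * rexp (x ^ 2 / 8) := by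
      have h7 : Real.sqrt 2 * Real.sqrt 2 = 2 := Real.mul_self_sqrt (by norm_num)
      have hrs : Real.sqrt 2 * |x| ≤ 2 + x ^ 2 / 4 := by
        nlinarith [sq_nonneg (|x| / 2 - Real.sqrt 2), sq_abs x]
      have h6 : 2 * |x| ≤ Real.sqrt 2 * (2 + x ^ 2 / 4) := by
        calc 2 * |x| = (Real.sqrt 2 * Real.sqrt 2) * |x| := by rw [h7]
          _ = Real.sqrt 2 * (Real.sqrt 2 * |x|) := by ring
          _ ≤ Real.sqrt 2 * (2 + x ^ 2 / 4) :=
              mul_le_mul_of_nonneg_left hrs (Real.sqrt_nonneg 2)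
      have h5 : |x| ≤ Real.sqrt 2 * (1 + x ^ 2 / 8) := by nlinarith [h6]
      nlinarith [Real.exp_pos (x ^ 2 / 8), Real.sqrt_nonneg 2]
    have hsqrt : Real.sqrt 2 ≤ √(2 * π) := Real.sqrt_le_sqrt (by nlinarith [Real.pi_gt_three])
    have hepos : (0:ℝ) < rexp (x ^ 2 / 8) := Real.exp_pos _
    have hinv : rexp (- x ^ 2 / 8) = (rexp (x ^ 2 / 8))⁻¹ := by
      rw [← Real.exp_neg]; ring_nf
    rw [hinv, ← div_eq_mul_inv, div_le_iff₀ hepos]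
    calc |x| ≤ Real.sqrt 2 * rexp (x ^ 2 / 8) := key
      _ ≤ √(2 * π) * rexp (x ^ 2 / 8) := by nlinarith
  have h1 : (|x| * rexp (- x ^ 2 / 8)) * (√(2 * π))⁻¹ ≤ 1 := by
    rw [← div_eq_mul_inv, div_le_one hpos]; exact hxe
  rw [habs]
  calc stdNormalCDF v - stdNormalCDF u
      ≤ (v - u) * ((√(2 * π))⁻¹ * rexp (- x ^ 2 / 8)) := hsub
    _ = |l - 1| * ((|x| * rexp (- x ^ 2 / 8)) * (√(2 * π))⁻¹) := by rw [hlen]; ring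
    _ ≤ |l - 1| * 1 := mul_le_mul_of_nonneg_left h1 (abs_nonneg _)
    _ = |l - 1| := mul_one _

/-- transference lemma: if `ξ'_η` satisfies a quantitative CLT and `ξ_η` is
close to `ξ'_η` in mean, variance and distribution, then `ξ_η` satisfies a quantitative CLT. -/
theorem stmt10 {Ω : Type*} [MeasureSpace Ω] [IsProbabilityMeasure (ℙ : Measure Ω)]
    (ξ ξ' : ℕ → Ω → ℝ) (μ μ' σ σ' : ℕ → ℝ)
    (hσ : ∀ η, 0 < σ η) (hσ' : ∀ η, 0 < σ' η)
    (hμ : ∀ η, μ η = ∫ ω, ξ η ω) (hμ' : ∀ η, μ' η = ∫ ω, ξ' η ω)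
    (hvar : ∀ η, (σ η) ^ 2 = ProbabilityTheory.variance (ξ η) ℙ)
    (hvar' : ∀ η, (σ' η) ^ 2 = ProbabilityTheory.variance (ξ' η) ℙ)
    (ε₁ ε₂ ε₃ ε₄ : ℕ → ℝ)
    (hε₁ : Tendsto ε₁ atTop (nhds 0)) (hε₂ : Tendsto ε₂ atTop (nhds 0))
    (hε₃ : Tendsto ε₃ atTop (nhds 0)) (hε₄ : Tendsto ε₄ atTop (nhds 0))
    (h1 : ∀ η, |μ' η - μ η| ≤ ε₁ η * σ η)
    (h2 : ∀ η, |(σ' η) ^ 2 - (σ η) ^ 2| ≤ ε₂ η * (σ η) ^ 2)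
    (h3 : ∀ η x, |(ℙ {ω | ξ' η ω ≤ x}).toReal - (ℙ {ω | ξ η ω ≤ x}).toReal| ≤ ε₃ η)
    (h4 : ∀ η x, |(ℙ {ω | (ξ' η ω - μ' η) / σ' η ≤ x}).toReal - stdNormalCDF x| ≤ ε₄ η) :
    ∃ c > 0, ∀ η x,
      |(ℙ {ω | (ξ η ω - μ η) / σ η ≤ x}).toReal - stdNormalCDF x| ≤
        c * (ε₁ η + ε₂ η + ε₃ η + ε₄ η) := by
  refine ⟨4, by norm_num, fun η x => ?_⟩
  -- nonnegativity of the errors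
  have hσp := hσ η
  have hσ'p := hσ' η
  have he1 : 0 ≤ ε₁ η := by nlinarith [abs_nonneg (μ' η - μ η), h1 η]
  have he2 : 0 ≤ ε₂ η := by nlinarith [abs_nonneg ((σ' η) ^ 2 - (σ η) ^ 2), h2 η, pow_pos hσp 2]
  have he3 : 0 ≤ ε₃ η := le_trans (abs_nonneg _) (h3 η 0)
  have he4 : 0 ≤ ε₄ η := le_trans (abs_nonneg _) (h4 η 0)
  -- bounds on probabilities
  have hP0 : (0:ℝ) ≤ (ℙ {ω | (ξ η ω - μ η) / σ η ≤ x}).toReal := ENNReal.toReal_nonneg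
  have hP1 : (ℙ {ω | (ξ η ω - μ η) / σ η ≤ x}).toReal ≤ 1 := prob_toReal_le_one _ _
  by_cases hc : (1:ℝ)/2 ≤ ε₂ η
  · have : |(ℙ {ω | (ξ η ω - μ η) / σ η ≤ x}).toReal - stdNormalCDF x| ≤ 2 := by
      rw [abs_le]
      constructor
      · have := stdNormalCDF_le_one x; linarith
      · have := stdNormalCDF_nonneg x; linarith
    linarith
  push_neg at hc
  -- quantitative regime
  set y := μ η + σ η * x with hy
  set z := (y - μ' η) / σ' η with hz
  set l := σ η / σ' η with hl
  have hσ'σ : σ' η ≤ 2 * σ η := by nlinarith [abs_le.1 (h2 η), sq_nonneg (σ η)]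
  have hσσ' : σ η ≤ 2 * σ' η := by nlinarith [abs_le.1 (h2 η), sq_nonneg (σ η)]
  have hlhalf : 1/2 ≤ l := by rw [hl, le_div_iff₀ hσ'p]; linarith
  have hl2 : l ≤ 2 := by rw [hl, div_le_iff₀ hσ'p]; linarith
  -- set equalities
  have hset1 : {ω | (ξ η ω - μ η) / σ η ≤ x} = {ω | ξ η ω ≤ y} := by
    ext ω
    simp only [Set.mem_setOf_eq, div_le_iff₀ hσp, hy]
    constructor <;> intro <;> linarith
  have hzmul : z * σ' η = y - μ' η := div_mul_cancel₀ _ (ne_of_gt hσ'p)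
  have hset2 : {ω | ξ' η ω ≤ y} = {ω | (ξ' η ω - μ' η) / σ' η ≤ z} := by
    ext ω
    simp only [Set.mem_setOf_eq, div_le_iff₀ hσ'p]
    constructor <;> intro <;> linarith
  -- the four error pieces
  have e3 : |(ℙ {ω | ξ η ω ≤ y}).toReal - (ℙ {ω | ξ' η ω ≤ y}).toReal| ≤ ε₃ η := by
    rw [abs_sub_comm]; exact h3 η y
  have e4 : |(ℙ {ω | ξ' η ω ≤ y}).toReal - stdNormalCDF z| ≤ ε₄ η := by
    rw [hset2]; exact h4 η z
  have ezl : |z - l * x| ≤ 2 * ε₁ η := by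
    have : z - l * x = (μ η - μ' η) / σ' η := by
      rw [hz, hl, hy]; field_simp; ring
    rw [this, abs_div, abs_of_pos hσ'p, div_le_iff₀ hσ'p, abs_sub_comm]
    calc |μ' η - μ η| ≤ ε₁ η * σ η := h1 η
      _ ≤ 2 * ε₁ η * σ' η := by nlinarith
  have eL : |stdNormalCDF z - stdNormalCDF (l * x)| ≤ 2 * ε₁ η :=
    le_trans (cdf_lipschitz (l * x) z) ezl
  have el1 : |l - 1| ≤ 2 * ε₂ η := by
    have hd : |σ η - σ' η| * (σ η + σ' η) = |(σ' η)^2 - (σ η)^2| := by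
      rw [← abs_of_pos (show (0:ℝ) < σ η + σ' η by linarith), ← abs_mul, abs_sub_comm]
      congr 1; ring
    have hd2 : |σ η - σ' η| ≤ ε₂ η * σ η := by
      have h2' := h2 η
      nlinarith [abs_nonneg (σ η - σ' η)]
    have : l - 1 = (σ η - σ' η) / σ' η := by rw [hl]; field_simp
    rw [this, abs_div, abs_of_pos hσ'p, div_le_iff₀ hσ'p]
    nlinarith
  have eS : |stdNormalCDF (l * x) - stdNormalCDF x| ≤ 2 * ε₂ η :=
    le_trans (cdf_scale x hlhalf) el1
  -- assemble
  rw [hset1]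
  calc |(ℙ {ω | ξ η ω ≤ y}).toReal - stdNormalCDF x|
      ≤ |(ℙ {ω | ξ η ω ≤ y}).toReal - (ℙ {ω | ξ' η ω ≤ y}).toReal|
        + |(ℙ {ω | ξ' η ω ≤ y}).toReal - stdNormalCDF x| := abs_sub_le _ _ _
    _ ≤ |(ℙ {ω | ξ η ω ≤ y}).toReal - (ℙ {ω | ξ' η ω ≤ y}).toReal|
        + (|(ℙ {ω | ξ' η ω ≤ y}).toReal - stdNormalCDF z|
          + |stdNormalCDF z - stdNormalCDF x|) := by
        linarith [abs_sub_le ((ℙ {ω | ξ' η ω ≤ y}).toReal) (stdNormalCDF z) (stdNormalCDF x)]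
    _ ≤ ε₃ η + (ε₄ η + (|stdNormalCDF z - stdNormalCDF (l * x)|
          + |stdNormalCDF (l * x) - stdNormalCDF x|)) := by
        linarith [abs_sub_le (stdNormalCDF z) (stdNormalCDF (l * x)) (stdNormalCDF x)]
    _ ≤ ε₃ η + (ε₄ η + (2 * ε₁ η + 2 * ε₂ η)) := by linarith
    _ ≤ 4 * (ε₁ η + ε₂ η + ε₃ η + ε₄ η) := by linarith
end
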